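/- arXiv:2404.07958 — 4 statements merged into one kernel-verified Lean document; each statement's English description precedes it below -/
import Mathlib

section
/- The number of parking functions of size n whose parking permutation avoids 123, 132, and 213 equals (2/3)·2^n + (1/3)·(−1)^n. -/
open Finset

noncomputable section

/-- The parking process over the first `k` cars (cars are `0,...,k-1`, i.e. cars `1,...,k`
in 1-indexed terms): returns `some occ` where `occ` maps each spot to the car parked there
(`none` meaning empty), or `none` if some car failed to park.  Car `c` drives to its
preferred spot `f c` and parks at the first free spot with index `≥ f c`, failing if
no such spot exists. -/
def parkAux {n : ℕ} (f : Fin n → Fin n) : ℕ → Option (Fin n → Option (Fin n))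
  | 0 => some fun _ => none
  | k + 1 =>
    (parkAux f k).bind fun occ =>
      if h : k < n then
        if hS : (Finset.univ.filter fun s => f ⟨k, h⟩ ≤ s ∧ occ s = none).Nonempty then
          some (Function.update occ
            ((Finset.univ.filter fun s => f ⟨k, h⟩ ≤ s ∧ occ s = none).min' hS)
            (some ⟨k, h⟩))
        else none
      else some occ

/-- All `n` cars park successfully. -/
def AllPark {n : ℕ} (f : Fin n → Fin n) : Prop := (parkAux f n).isSome

/-- `f` is a parking function: for every `i ∈ [n]`, at least `i` cars prefer
the first `i` spots.  (Here `i : Fin n` denotes the `(i+1)`-st spot, 0-indexed.) -/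
def IsParkingFunction {n : ℕ} (f : Fin n → Fin n) : Prop :=
  ∀ i : Fin n, i.val + 1 ≤ (Finset.univ.filter fun j => f j ≤ i).card

/-- `ρ` is the parking permutation of `f`: after all cars have parked,
spot `i` is occupied by car `ρ i`. -/
def IsParkingPerm {n : ℕ} (f : Fin n → Fin n) (ρ : Equiv.Perm (Fin n)) : Prop :=
  parkAux f n = some fun i => some (ρ i)

/-- `π` contains `σ` as a pattern. -/
def ContainsPattern {n m : ℕ} (π : Equiv.Perm (Fin n)) (σ : Equiv.Perm (Fin m)) : Prop :=
  ∃ g : Fin m → Fin n, StrictMono g ∧ ∀ a b : Fin m, σ a < σ b ↔ π (g a) < π (g b)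

/-- `ρ` avoids every pattern in the list `pats`. -/
def AvoidsAll {n : ℕ} (ρ : Equiv.Perm (Fin n)) (pats : List (Equiv.Perm (Fin 3))) : Prop :=
  ∀ σ ∈ pats, ¬ ContainsPattern ρ σ

/-- The number of parking functions of size `n` whose parking permutation avoids
all patterns in `pats`. -/
def pk (n : ℕ) (pats : List (Equiv.Perm (Fin 3))) : ℕ :=
  Nat.card {f : Fin n → Fin n // IsParkingFunction f ∧
    ∃ ρ : Equiv.Perm (Fin n), IsParkingPerm f ρ ∧ AvoidsAll ρ pats}

def p123 : Equiv.Perm (Fin 3) := Equiv.ofBijective ![0, 1, 2] (by decide)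
def p132 : Equiv.Perm (Fin 3) := Equiv.ofBijective ![0, 2, 1] (by decide)
def p213 : Equiv.Perm (Fin 3) := Equiv.ofBijective ![1, 0, 2] (by decide)
def p231 : Equiv.Perm (Fin 3) := Equiv.ofBijective ![1, 2, 0] (by decide)
def p312 : Equiv.Perm (Fin 3) := Equiv.ofBijective ![2, 0, 1] (by decide)
def p321 : Equiv.Perm (Fin 3) := Equiv.ofBijective ![2, 1, 0] (by decide)


section Part1
variable {n : ℕ}

lemma strictMono_triple {x y z : Fin n} (hxy : x < y) (hyz : y < z) :
    StrictMono ![x, y, z] := by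
  intro a b hab
  fin_cases a <;> fin_cases b <;> simp_all <;> first
    | exact hxy | exact hyz | exact hxy.trans hyz | exact absurd hab (by omega)

lemma gap2_of_avoids (ρ : Equiv.Perm (Fin n))
    (h : AvoidsAll ρ [p123, p132, p213]) :
    ∀ i j : Fin n, (i : ℕ) + 2 ≤ (j : ℕ) → ρ j < ρ i := by
  intro i j hij
  by_contra hlt
  have hij' : i < j := by rw [Fin.lt_iff_val_lt_val]; omega
  have hne : ρ i ≠ ρ j := fun he => by
    have := ρ.injective he; subst this; omega
  have hwi : ρ i < ρ j := lt_of_le_of_ne (not_lt.mp hlt) hne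
  have hb : (i : ℕ) + 1 < n := lt_of_le_of_lt (by omega) j.isLt
  set b : Fin n := ⟨(i : ℕ) + 1, hb⟩ with hbdef
  have hib : i < b := by rw [Fin.lt_iff_val_lt_val]; show (i : ℕ) < (i : ℕ) + 1; omega
  have hbj : b < j := by rw [Fin.lt_iff_val_lt_val]; show (i : ℕ) + 1 < (j : ℕ); omega
  have hbne1 : ρ b ≠ ρ j := fun he => hbj.ne (ρ.injective he)
  have hbne2 : ρ b ≠ ρ i := fun he => hib.ne' (ρ.injective he)
  have e0 : ![i,b,j] 0 = i := rfl
  have e1 : ![i,b,j] 1 = b := rfl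
  have e2 : ![i,b,j] 2 = j := rfl
  rw [Fin.lt_iff_val_lt_val] at hwi
  rcases lt_or_gt_of_ne hbne1 with hbw | hwb
  · rw [Fin.lt_iff_val_lt_val] at hbw
    rcases lt_or_gt_of_ne hbne2 with hb2 | hb2 <;> [rw [Fin.lt_iff_val_lt_val] at hb2; rw [Fin.lt_iff_val_lt_val] at hb2]
    · -- ρ b < ρ i : 213
      refine h p213 (by simp) ⟨![i, b, j], strictMono_triple hib hbj, ?_⟩
      intro a c
      fin_cases a <;> fin_cases c <;>
        simp only [Fin.zero_eta, Fin.mk_one, show ((⟨2, by omega⟩ : Fin 3)) = 2 from rfl,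
          e0, e1, e2, Fin.lt_iff_val_lt_val,
          show ((p213 0 : Fin 3) : ℕ) = 1 from rfl, show ((p213 1 : Fin 3) : ℕ) = 0 from rfl,
          show ((p213 2 : Fin 3) : ℕ) = 2 from rfl] <;> omega
    · -- ρ i < ρ b : 123
      refine h p123 (by simp) ⟨![i, b, j], strictMono_triple hib hbj, ?_⟩
      intro a c
      fin_cases a <;> fin_cases c <;>
        simp only [Fin.zero_eta, Fin.mk_one, show ((⟨2, by omega⟩ : Fin 3)) = 2 from rfl,
          e0, e1, e2, Fin.lt_iff_val_lt_val,
          show ((p123 0 : Fin 3) : ℕ) = 0 from rfl, show ((p123 1 : Fin 3) : ℕ) = 1 from rfl,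
          show ((p123 2 : Fin 3) : ℕ) = 2 from rfl] <;> omega
  · -- ρ j < ρ b : 132
    rw [Fin.lt_iff_val_lt_val] at hwb
    refine h p132 (by simp) ⟨![i, b, j], strictMono_triple hib hbj, ?_⟩
    intro a c
    fin_cases a <;> fin_cases c <;>
      simp only [Fin.zero_eta, Fin.mk_one, show ((⟨2, by omega⟩ : Fin 3)) = 2 from rfl,
        e0, e1, e2, Fin.lt_iff_val_lt_val,
        show ((p132 0 : Fin 3) : ℕ) = 0 from rfl, show ((p132 1 : Fin 3) : ℕ) = 2 from rfl,
        show ((p132 2 : Fin 3) : ℕ) = 1 from rfl] <;> omega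

lemma avoids_of_gap2 (ρ : Equiv.Perm (Fin n))
    (h : ∀ i j : Fin n, (i : ℕ) + 2 ≤ (j : ℕ) → ρ j < ρ i) :
    AvoidsAll ρ [p123, p132, p213] := by
  intro σ hσ ⟨g, hg, hiff⟩
  have h02 : ((g 0 : Fin n) : ℕ) + 2 ≤ ((g 2 : Fin n) : ℕ) := by
    have h01 : g 0 < g 1 := hg (by decide)
    have h12 : g 1 < g 2 := hg (by decide)
    rw [Fin.lt_iff_val_lt_val] at h01 h12
    omega
  have hρ := h _ _ h02
  have hσ02 : σ 0 < σ 2 := by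
    simp only [List.mem_cons, List.mem_singleton] at hσ
    rcases hσ with rfl | rfl | hσ
    · decide
    · decide
    · simp at hσ; subst hσ; decide
  exact absurd ((hiff 0 2).mp hσ02) (not_lt.mpr hρ.le)

end Part1


section Part2
variable {n : ℕ} (f : Fin n → Fin n)

lemma parkAux_succ (k : ℕ) :
    parkAux f (k + 1) = (parkAux f k).bind fun occ =>
      if h : k < n then
        if hS : (Finset.univ.filter fun s => f ⟨k, h⟩ ≤ s ∧ occ s = none).Nonempty then
          some (Function.update occ
            ((Finset.univ.filter fun s => f ⟨k, h⟩ ≤ s ∧ occ s = none).min' hS)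
            (some ⟨k, h⟩))
        else none
      else some occ := rfl

lemma parkAux_inv : ∀ (k : ℕ) (occ : Fin n → Option (Fin n)), parkAux f k = some occ →
    (∀ s c, occ s = some c → (c : ℕ) < k ∧ f c ≤ s) ∧
    (∀ s s' c, occ s = some c → occ s' = some c → s = s') ∧
    (∀ s c, occ s = some c → ∀ t : Fin n, f c ≤ t → t < s →
      ∃ c' : Fin n, occ t = some c' ∧ (c' : ℕ) < (c : ℕ)) := by
  intro k
  induction k with
  | zero =>
    intro occ h
    simp only [parkAux, Option.some_inj] at h
    subst h
    exact ⟨fun s c hc => by simp at hc, fun s s' c hc hc' => by simp at hc,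
      fun s c hc => by simp at hc⟩
  | succ k ih =>
    intro occ h
    rw [parkAux_succ] at h
    cases hprev : parkAux f k with
    | none => rw [hprev] at h; simp at h
    | some occ0 =>
      rw [hprev, Option.bind_some] at h
      obtain ⟨ih1, ih2, ih3⟩ := ih occ0 hprev
      by_cases hk : k < n
      · rw [dif_pos hk] at h
        by_cases hS : (Finset.univ.filter fun s => f ⟨k, hk⟩ ≤ s ∧ occ0 s = none).Nonempty
        · rw [dif_pos hS, Option.some_inj] at h
          subst h
          set S := (Finset.univ.filter fun s => f ⟨k, hk⟩ ≤ s ∧ occ0 s = none) with hSdef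
          set m := S.min' hS with hm
          have hmS : m ∈ Finset.univ ∧ f ⟨k, hk⟩ ≤ m ∧ occ0 m = none :=
            Finset.mem_filter.mp (S.min'_mem hS)
          refine ⟨?_, ?_, ?_⟩
          · intro s c hc
            rcases eq_or_ne s m with rfl | hsm
            · rw [Function.update_self] at hc
              cases hc
              exact ⟨by simp, hmS.2.1⟩
            · rw [Function.update_of_ne hsm] at hc
              obtain ⟨h1, h2⟩ := ih1 s c hc
              exact ⟨by omega, h2⟩
          · intro s s' c hc hc'
            rcases eq_or_ne s m with rfl | hsm <;> rcases eq_or_ne s' m with rfl | hsm'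
            · rfl
            · rw [Function.update_self] at hc
              rw [Function.update_of_ne hsm'] at hc'
              cases hc
              have hv : k < k := by simpa using (ih1 s' _ hc').1
              omega
            · rw [Function.update_self] at hc'
              rw [Function.update_of_ne hsm] at hc
              cases hc'
              have hv : k < k := by simpa using (ih1 s _ hc).1
              omega
            · exact ih2 s s' c (by rwa [Function.update_of_ne hsm] at hc)
                (by rwa [Function.update_of_ne hsm'] at hc')
          · intro s c hc t hft hts
            rcases eq_or_ne s m with rfl | hsm
            · rw [Function.update_self] at hc
              cases hc
              have htS : t ∉ S := fun hmem => absurd (S.min'_le t hmem) (not_le.mpr hts)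
              rw [hSdef, Finset.mem_filter] at htS
              push_neg at htS
              have hnn := htS (Finset.mem_univ t) hft
              cases hocc : occ0 t with
              | none => exact absurd hocc hnn
              | some c' =>
                have hlt := (ih1 t c' hocc).1
                refine ⟨c', ?_, by simpa using hlt⟩
                rw [Function.update_of_ne hts.ne]
                exact hocc
            · rw [Function.update_of_ne hsm] at hc
              obtain ⟨c', hc', hlt⟩ := ih3 s c hc t hft hts
              have htm : t ≠ m := by
                intro he
                rw [he, hmS.2.2] at hc'
                cases hc'
              exact ⟨c', by rw [Function.update_of_ne htm]; exact hc', hlt⟩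
        · rw [dif_neg hS] at h; simp at h
      · rw [dif_neg hk, Option.some_inj] at h
        subst h
        exact ⟨fun s c hc => ⟨by have := (ih1 s c hc).1; omega, (ih1 s c hc).2⟩, ih2, ih3⟩

end Part2


section Part3
variable {n : ℕ}

/-- The local characterization of the good parking functions. -/
def CC {n : ℕ} (f : Fin n → Fin n) : Prop :=
  ∀ c : Fin n,
    (n ≤ (f c : ℕ) + (c : ℕ) + 2) ∧ ((f c : ℕ) + (c : ℕ) ≤ n) ∧
    ((f c : ℕ) + (c : ℕ) + 2 = n → ∀ h' : (c : ℕ) + 1 < n,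
        n ≤ (f ⟨(c : ℕ) + 1, h'⟩ : ℕ) + (c : ℕ) + 2) ∧
    ((f c : ℕ) + (c : ℕ) = n → ∃ h' : (c : ℕ) - 1 < n,
        1 ≤ (c : ℕ) ∧ (f ⟨(c : ℕ) - 1, h'⟩ : ℕ) + ((c : ℕ) - 1) + 2 = n)

/-- After `k` steps, was the previous car a "block opener"? -/
def BB (f : Fin n → Fin n) (k : ℕ) : Prop :=
  ∃ h' : k - 1 < n, 1 ≤ k ∧ (f ⟨k - 1, h'⟩ : ℕ) + (k - 1) + 2 = n

lemma BB_succ (f : Fin n → Fin n) {k : ℕ} (hk : k < n) :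
    BB f (k + 1) ↔ (f ⟨k, hk⟩ : ℕ) + k + 2 = n := by
  constructor
  · rintro ⟨h', -, he⟩
    have : (⟨k + 1 - 1, h'⟩ : Fin n) = ⟨k, hk⟩ := by ext; simp
    rw [this] at he
    simpa using he
  · intro he
    exact ⟨by simpa using hk, by omega, by simpa using he⟩

/-- Description of the free spots after `k` steps. -/
def FreeC (f : Fin n → Fin n) (k : ℕ) (s : Fin n) : Prop :=
  (BB f k ∧ ((s : ℕ) + k + 2 ≤ n ∨ (s : ℕ) + k = n)) ∨ (¬ BB f k ∧ (s : ℕ) + k + 1 ≤ n)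

lemma part3_inv (f : Fin n → Fin n) (hC : CC f) :
    ∀ k, k ≤ n → ∃ occ, parkAux f k = some occ ∧
      (∀ s c : Fin n, occ s = some c → n ≤ (s : ℕ) + (c : ℕ) + 2 ∧ (s : ℕ) + (c : ℕ) ≤ n) ∧
      (∀ s : Fin n, occ s = none ↔ FreeC f k s) := by
  intro k
  induction k with
  | zero =>
    intro _
    refine ⟨fun _ => none, rfl, fun s c hc => by simp at hc, fun s => ?_⟩
    have hB : ¬ BB f 0 := by rintro ⟨_, h1, _⟩; omega
    simp only [FreeC, true_iff]
    exact Or.inr ⟨hB, by have := s.isLt; omega⟩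
  | succ k ih =>
    intro hk1
    have hk : k < n := by omega
    obtain ⟨occ, hocc, hvals, hfree⟩ := ih (by omega)
    obtain ⟨hinv1, hinv2, hinv3⟩ := parkAux_inv f k occ hocc
    set c : Fin n := ⟨k, hk⟩ with hcdef
    obtain ⟨hc1, hc2, hc3, hc4⟩ := hC c
    have hcv : (c : ℕ) = k := rfl
    have hcv2 : ((⟨k, hk⟩ : Fin n) : ℕ) = k := rfl
    have hfcv : (f (⟨k, hk⟩ : Fin n) : ℕ) = (f c : ℕ) := rfl
    by_cases hB : BB f k
    · -- previous car opened a block: car k parks at spot n - k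
      obtain ⟨hk1', hkge, hprev⟩ := hB
      have hfk : n ≤ (f c : ℕ) + k + 1 := by
        obtain ⟨-, -, h3, -⟩ := hC ⟨k - 1, hk1'⟩
        have harg : ((⟨k - 1, hk1'⟩ : Fin n) : ℕ) + 1 < n := show k - 1 + 1 < n by omega
        have h3' := h3 hprev harg
        have he : (⟨((⟨k - 1, hk1'⟩ : Fin n) : ℕ) + 1, harg⟩ : Fin n) = c := by
          ext
          show k - 1 + 1 = k
          omega
        rw [he] at h3'
        have hv : ((⟨k - 1, hk1'⟩ : Fin n) : ℕ) = k - 1 := rfl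
        omega
      have hq : n - k < n := by omega
      set q : Fin n := ⟨n - k, hq⟩ with hqdef
      have hqv : (q : ℕ) = n - k := rfl
      have hqv2 : ((⟨n - k, hq⟩ : Fin n) : ℕ) = n - k := rfl
      have hqfree : occ q = none := (hfree q).mpr (Or.inl ⟨⟨hk1', hkge, hprev⟩, Or.inr (by simp [hqdef]; omega)⟩)
      have hqmem : q ∈ Finset.univ.filter fun s => f c ≤ s ∧ occ s = none := by
        rw [Finset.mem_filter]
        exact ⟨Finset.mem_univ q, by rw [Fin.le_def]; simp [hqdef]; omega, hqfree⟩
      have hS : (Finset.univ.filter fun s => f c ≤ s ∧ occ s = none).Nonempty := ⟨q, hqmem⟩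
      have hmin : (Finset.univ.filter fun s => f c ≤ s ∧ occ s = none).min' hS = q := by
        apply le_antisymm (Finset.min'_le _ q hqmem)
        apply Finset.le_min'
        intro y hy
        rw [Finset.mem_filter] at hy
        obtain ⟨-, hy1, hy2⟩ := hy
        rw [Fin.le_def] at hy1 ⊢
        rcases (hfree y).mp hy2 with ⟨-, hy3 | hy3⟩ | ⟨hnB, -⟩
        · omega
        · simp [hqdef]; omega
        · exact absurd ⟨hk1', hkge, hprev⟩ hnB
      refine ⟨Function.update occ q (some c), ?_, ?_, ?_⟩
      · rw [parkAux_succ, hocc, Option.bind_some, dif_pos hk, dif_pos hS, hmin]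
      · intro s c' hc'
        rcases eq_or_ne s q with rfl | hsq
        · rw [Function.update_self] at hc'
          cases hc'
          constructor <;> simp [hqdef, hcv] <;> omega
        · rw [Function.update_of_ne hsq] at hc'
          exact ⟨by have := (hvals s c' hc').1; omega, by have := (hvals s c' hc').2; omega⟩
      · intro s
        have hnB1 : ¬ BB f (k + 1) := by
          rw [BB_succ f hk, ← hcdef]
          omega
        simp only [FreeC, hnB1, false_and, false_or, not_false_eq_true, true_and]
        rcases eq_or_ne s q with rfl | hsq
        · rw [Function.update_self]
          simp [hqdef]
          omega
        · rw [Function.update_of_ne hsq, hfree s]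
          have hsqv : (s : ℕ) ≠ n - k := fun he => hsq (by ext; simp [hqdef, he])
          simp only [FreeC]
          constructor
          · rintro (⟨-, h | h⟩ | ⟨hnB, -⟩)
            · omega
            · omega
            · exact absurd ⟨hk1', hkge, hprev⟩ hnB
          · intro h
            exact Or.inl ⟨⟨hk1', hkge, hprev⟩, Or.inl (by omega)⟩
    · -- fresh start: car k parks at its preferred spot f c
      have hfk : (f c : ℕ) + k + 1 ≤ n := by
        rcases Nat.lt_or_ge ((f c : ℕ) + k) n with h | h
        · omega
        · have he : (f c : ℕ) + (c : ℕ) = n := by omega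
          obtain ⟨h', h1, h2⟩ := hc4 he
          exact absurd ⟨h', by omega, by simpa using h2⟩ hB
      have hpfree : occ (f c) = none := (hfree (f c)).mpr (Or.inr ⟨hB, by omega⟩)
      have hpmem : f c ∈ Finset.univ.filter fun s => f c ≤ s ∧ occ s = none := by
        rw [Finset.mem_filter]
        exact ⟨Finset.mem_univ _, le_refl _, hpfree⟩
      have hS : (Finset.univ.filter fun s => f c ≤ s ∧ occ s = none).Nonempty := ⟨f c, hpmem⟩
      have hmin : (Finset.univ.filter fun s => f c ≤ s ∧ occ s = none).min' hS = f c := by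
        apply le_antisymm (Finset.min'_le _ _ hpmem)
        apply Finset.le_min'
        intro y hy
        exact ((Finset.mem_filter.mp hy).2).1
      refine ⟨Function.update occ (f c) (some c), ?_, ?_, ?_⟩
      · rw [parkAux_succ, hocc, Option.bind_some, dif_pos hk, dif_pos hS, hmin]
      · intro s c' hc'
        rcases eq_or_ne s (f c) with rfl | hsp
        · rw [Function.update_self] at hc'
          cases hc'
          exact ⟨by omega, by omega⟩
        · rw [Function.update_of_ne hsp] at hc'
          exact ⟨by have := (hvals s c' hc').1; omega, by have := (hvals s c' hc').2; omega⟩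
      · intro s
        have hB1 : BB f (k + 1) ↔ (f c : ℕ) + k + 2 = n := BB_succ f hk
        rcases eq_or_ne s (f c) with rfl | hsp
        · rw [Function.update_self]
          apply iff_of_false (by simp)
          rintro (⟨hBk, h | h⟩ | ⟨hnB, h⟩)
          · rw [hB1] at hBk; omega
          · rw [hB1] at hBk; omega
          · exact hnB (hB1.mpr (by omega))
        · rw [Function.update_of_ne hsp, hfree s]
          have hspv : (s : ℕ) ≠ (f c : ℕ) := fun he => hsp (by ext; exact he)
          simp only [FreeC]
          constructor
          · rintro (⟨hBk, -⟩ | ⟨-, h⟩)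
            · exact absurd hBk hB
            · by_cases hB1' : (f c : ℕ) + k + 2 = n
              · exact Or.inl ⟨hB1.mpr hB1', by omega⟩
              · exact Or.inr ⟨fun hx => hB1' (hB1.mp hx), by omega⟩
          · rintro (⟨hBk, h | h⟩ | ⟨hnBk, h⟩)
            · exact Or.inr ⟨hB, by omega⟩
            · exact Or.inr ⟨hB, by omega⟩
            · have : ¬ ((f c : ℕ) + k + 2 = n) := fun hx => hnBk (hB1.mpr hx)
              exact Or.inr ⟨hB, by omega⟩

lemma part3_main (f : Fin n → Fin n) (hC : CC f) :
    IsParkingFunction f ∧ ∃ ρ : Equiv.Perm (Fin n),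
      IsParkingPerm f ρ ∧ ∀ i j : Fin n, (i : ℕ) + 2 ≤ (j : ℕ) → ρ j < ρ i := by
  obtain ⟨occ, hocc, hvals, hfree⟩ := part3_inv f hC n le_rfl
  obtain ⟨hinv1, hinv2, hinv3⟩ := parkAux_inv f n occ hocc
  have htot : ∀ s : Fin n, (occ s).isSome := by
    intro s
    rcases hs : occ s with _ | c
    · exfalso
      rcases (hfree s).mp hs with ⟨⟨h', h1, h2⟩, -⟩ | ⟨-, h⟩
      · have := (f ⟨n - 1, h'⟩).isLt; omega
      · have := s.isLt; omega
    · rfl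
  set ρ0 : Fin n → Fin n := fun s => (occ s).get (htot s) with hρ0
  have hρ0e : ∀ s, occ s = some (ρ0 s) := fun s => by simp [hρ0]
  have hinj : Function.Injective ρ0 := by
    intro s s' he
    exact hinv2 s s' (ρ0 s) (hρ0e s) (by rw [hρ0e s', he])
  have hbij := Finite.injective_iff_bijective.mp hinj
  refine ⟨?_, Equiv.ofBijective ρ0 hbij, ?_, ?_⟩
  · intro i
    have hsub : ∀ s ∈ Finset.Iic i, ρ0 s ∈ Finset.univ.filter fun j => f j ≤ i := by
      intro s hs
      rw [Finset.mem_filter]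
      refine ⟨Finset.mem_univ _, le_trans ?_ (Finset.mem_Iic.mp hs)⟩
      exact (hinv1 s (ρ0 s) (hρ0e s)).2
    have := Finset.card_le_card_of_injOn ρ0 hsub (fun a _ b _ hab => hinj hab)
    rwa [Fin.card_Iic] at this
  · show parkAux f n = some _
    rw [hocc]
    congr 1
    funext s
    rw [hρ0e s]
    rfl
  · intro i j hij
    have h1 := (hvals i (ρ0 i) (hρ0e i)).1
    have h2 := (hvals j (ρ0 j) (hρ0e j)).2
    have hne : ρ0 j ≠ ρ0 i := fun he => by
      have := hinj he
      subst this
      omega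
    rw [Fin.lt_def]
    have : (ρ0 j : ℕ) ≠ (ρ0 i : ℕ) := fun he => hne (Fin.ext he)
    simp only [Equiv.ofBijective_apply]
    omega

end Part3


section Part4
variable {n : ℕ}

lemma rho_low (ρ : Equiv.Perm (Fin n))
    (hgap : ∀ i j : Fin n, (i : ℕ) + 2 ≤ (j : ℕ) → ρ j < ρ i) (s : Fin n) :
    n ≤ (ρ s : ℕ) + (s : ℕ) + 2 := by
  rcases Nat.lt_or_ge ((s : ℕ) + 2) n with h | h
  · set a : Fin n := ⟨(s : ℕ) + 2, h⟩ with ha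
    have hsub : ∀ t ∈ Finset.Ici a, ρ t ∈ Finset.Iio (ρ s) := by
      intro t ht
      rw [Finset.mem_Iio]
      refine hgap s t ?_
      have h' := Finset.mem_Ici.mp ht
      rw [Fin.le_def] at h'
      have hav : (a : ℕ) = (s : ℕ) + 2 := rfl
      omega
    have hcard := Finset.card_le_card_of_injOn ρ hsub (fun x _ y _ hxy => ρ.injective hxy)
    rw [Fin.card_Ici, Fin.card_Iio] at hcard
    have hav : (a : ℕ) = (s : ℕ) + 2 := rfl
    omega
  · omega

lemma rho_up (ρ : Equiv.Perm (Fin n))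
    (hgap : ∀ i j : Fin n, (i : ℕ) + 2 ≤ (j : ℕ) → ρ j < ρ i) (s : Fin n) :
    (ρ s : ℕ) + (s : ℕ) ≤ n := by
  rcases Nat.lt_or_ge (s : ℕ) 2 with h | h
  · have := (ρ s).isLt; omega
  · have hb : (s : ℕ) - 2 < n := by have := s.isLt; omega
    set b : Fin n := ⟨(s : ℕ) - 2, hb⟩ with hbdef
    have hsub : ∀ t ∈ Finset.Iic b, ρ t ∈ Finset.Ioi (ρ s) := by
      intro t ht
      rw [Finset.mem_Ioi]
      refine hgap t s ?_
      have := Finset.mem_Iic.mp ht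
      rw [Fin.le_def] at this
      have hbv : (b : ℕ) = (s : ℕ) - 2 := rfl
      omega
    have hcard := Finset.card_le_card_of_injOn ρ hsub (fun x _ y _ hxy => ρ.injective hxy)
    rw [Fin.card_Iic, Fin.card_Ioi] at hcard
    have hbv : (b : ℕ) = (s : ℕ) - 2 := rfl
    have := (ρ s).isLt
    have := s.isLt
    omega

lemma rho_val_ne {ρ : Equiv.Perm (Fin n)} {a b : Fin n} (hab : (a : ℕ) ≠ (b : ℕ)) :
    (ρ a : ℕ) ≠ (ρ b : ℕ) := fun he => hab (congrArg Fin.val (ρ.injective (Fin.ext he)))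

/-- The descending chain for rule (iii): the configuration
`ρ (n-c-1) = c+1`, `ρ (n-c) = c` is impossible. -/
lemma chainB (ρ : Equiv.Perm (Fin n))
    (hgap : ∀ i j : Fin n, (i : ℕ) + 2 ≤ (j : ℕ) → ρ j < ρ i) :
    ∀ cv : ℕ, ∀ c : Fin n, (c : ℕ) = cv → 1 ≤ (c : ℕ) →
      ∀ (h1 : n - (c : ℕ) - 1 < n) (h2 : n - (c : ℕ) < n),
      (ρ ⟨n - (c : ℕ) - 1, h1⟩ : ℕ) = (c : ℕ) + 1 →
      (ρ ⟨n - (c : ℕ), h2⟩ : ℕ) = (c : ℕ) → False := by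
  intro cv
  induction cv using Nat.strong_induction_on with
  | _ cv ih =>
    intro c hcv hc1 h1 h2 hr1 hr2
    have hcn := c.isLt
    -- the spot of car c-1
    have hdn : (c : ℕ) - 1 < n := by omega
    set d : Fin n := ⟨(c : ℕ) - 1, hdn⟩ with hddef
    have hdv : (d : ℕ) = (c : ℕ) - 1 := rfl
    set sd : Fin n := ρ.symm d with hsddef
    have hρsd : (ρ sd : ℕ) = (c : ℕ) - 1 := by rw [hsddef]; simp [hdv]
    have hlo := rho_low ρ hgap sd
    have hup := rho_up ρ hgap sd
    rw [hρsd] at hlo hup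
    -- sd ≠ the two known spots
    have hne1 : (sd : ℕ) ≠ n - (c : ℕ) - 1 := by
      intro he
      have : (ρ sd : ℕ) = (ρ ⟨n - (c : ℕ) - 1, h1⟩ : ℕ) := by
        congr 1
        exact congrArg ρ (Fin.ext he)
      omega
    have hne2 : (sd : ℕ) ≠ n - (c : ℕ) := by
      intro he
      have : (ρ sd : ℕ) = (ρ ⟨n - (c : ℕ), h2⟩ : ℕ) := by
        congr 1
        exact congrArg ρ (Fin.ext he)
      omega
    have hsdlt := sd.isLt
    have hkey : 2 ≤ (c : ℕ) ∧ (sd : ℕ) = n - (c : ℕ) + 1 := by omega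
    obtain ⟨hc2, hsdv⟩ := hkey
    -- recurse at c - 1
    refine ih ((c : ℕ) - 1) (by omega) d (by omega) (by omega)
      (by omega) (by omega) ?_ ?_
    · have he : (⟨n - (d : ℕ) - 1, by omega⟩ : Fin n) = ⟨n - (c : ℕ), h2⟩ := by
        ext; show n - (d : ℕ) - 1 = n - (c : ℕ); omega
      rw [he, hr2]
      omega
    · have he : (⟨n - (d : ℕ), by omega⟩ : Fin n) = sd := by
        ext; show n - (d : ℕ) = (sd : ℕ); omega
      rw [he, hρsd]

/-- The descending chain for rule (ii): the configuration
`ρ (n-c-3) = c+1`, `ρ (n-c-2) = c` is impossible. -/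
lemma chainQ (ρ : Equiv.Perm (Fin n))
    (hgap : ∀ i j : Fin n, (i : ℕ) + 2 ≤ (j : ℕ) → ρ j < ρ i) :
    ∀ cv : ℕ, ∀ c : Fin n, (c : ℕ) = cv → (c : ℕ) + 3 ≤ n →
      ∀ (h1 : n - (c : ℕ) - 3 < n) (h2 : n - (c : ℕ) - 2 < n),
      (ρ ⟨n - (c : ℕ) - 3, h1⟩ : ℕ) = (c : ℕ) + 1 →
      (ρ ⟨n - (c : ℕ) - 2, h2⟩ : ℕ) = (c : ℕ) → False := by
  intro cv
  induction cv using Nat.strong_induction_on with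
  | _ cv ih =>
    intro c hcv hc3 h1 h2 hr1 hr2
    have hcn := c.isLt
    -- the spot n - c - 1
    have hu : n - (c : ℕ) - 1 < n := by omega
    set u : Fin n := ⟨n - (c : ℕ) - 1, hu⟩ with hudef
    have huv : (u : ℕ) = n - (c : ℕ) - 1 := rfl
    have hlo := rho_low ρ hgap u
    have hup := rho_up ρ hgap u
    rw [huv] at hlo hup
    have hne1 : (ρ u : ℕ) ≠ (c : ℕ) + 1 := by
      intro he
      exact rho_val_ne (a := u) (b := ⟨n - (c : ℕ) - 3, h1⟩) (by show _ ≠ n - (c:ℕ) - 3; omega) (by rw [he, hr1])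
    have hne2 : (ρ u : ℕ) ≠ (c : ℕ) := by
      intro he
      exact rho_val_ne (a := u) (b := ⟨n - (c : ℕ) - 2, h2⟩) (by show _ ≠ n - (c:ℕ) - 2; omega) (by rw [he, hr2])
    have hkey : 1 ≤ (c : ℕ) ∧ (ρ u : ℕ) = (c : ℕ) - 1 := by omega
    obtain ⟨hc1, hρu⟩ := hkey
    -- the spot n - c
    have hw : n - (c : ℕ) < n := by omega
    set w : Fin n := ⟨n - (c : ℕ), hw⟩ with hwdef
    have hwv : (w : ℕ) = n - (c : ℕ) := rfl
    have hlo2 := rho_low ρ hgap w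
    have hup2 := rho_up ρ hgap w
    rw [hwv] at hlo2 hup2
    have hne3 : (ρ w : ℕ) ≠ (c : ℕ) := by
      intro he
      exact rho_val_ne (a := w) (b := ⟨n - (c : ℕ) - 2, h2⟩) (by show _ ≠ n - (c:ℕ) - 2; omega) (by rw [he, hr2])
    have hne4 : (ρ w : ℕ) ≠ (c : ℕ) - 1 := by
      intro he
      exact rho_val_ne (a := w) (b := u) (by show _ ≠ (u : ℕ); omega) (by rw [he, hρu])
    have hkey2 : 2 ≤ (c : ℕ) ∧ (ρ w : ℕ) = (c : ℕ) - 2 := by omega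
    obtain ⟨hc2, hρw⟩ := hkey2
    -- recurse at c - 2
    have hdn : (c : ℕ) - 2 < n := by omega
    refine ih ((c : ℕ) - 2) (by omega) ⟨(c : ℕ) - 2, hdn⟩ (by simp) (by simp; omega)
      (by simp; omega) (by simp; omega) ?_ ?_
    · have he : (⟨n - ((⟨(c : ℕ) - 2, hdn⟩ : Fin n) : ℕ) - 3, by simp; omega⟩ : Fin n) = u := by
        ext; show n - ((c : ℕ) - 2) - 3 = (u : ℕ); omega
      rw [he, hρu]
      show (c : ℕ) - 1 = (c : ℕ) - 2 + 1
      omega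
    · have he : (⟨n - ((⟨(c : ℕ) - 2, hdn⟩ : Fin n) : ℕ) - 2, by simp; omega⟩ : Fin n) = w := by
        ext; show n - ((c : ℕ) - 2) - 2 = (w : ℕ); omega
      rw [he, hρw]

lemma part4_main (f : Fin n → Fin n) (ρ : Equiv.Perm (Fin n))
    (hpp : IsParkingPerm f ρ)
    (hgap : ∀ i j : Fin n, (i : ℕ) + 2 ≤ (j : ℕ) → ρ j < ρ i) : CC f := by
  obtain ⟨hinv1, hinv2, hinv3⟩ := parkAux_inv f n _ hpp
  have hsome : ∀ s : Fin n, (fun i : Fin n => some (ρ i)) s = some (ρ s) := fun s => rfl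
  have key1 : ∀ c : Fin n, (f c : ℕ) ≤ (ρ.symm c : ℕ) := by
    intro c
    have h := (hinv1 (ρ.symm c) c (by simp)).2
    rwa [Fin.le_def] at h
  have key2 : ∀ c t : Fin n, f c ≤ t → (t : ℕ) < (ρ.symm c : ℕ) → (ρ t : ℕ) < (c : ℕ) := by
    intro c t hft hlt
    obtain ⟨c', hc', hlt'⟩ := hinv3 (ρ.symm c) c (by simp) t hft
      (by rw [Fin.lt_def]; exact hlt)
    have : ρ t = c' := by
      have := hc'
      exact Option.some_injective _ this
    rw [this]
    exact hlt'
  have hlow := rho_low ρ hgap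
  have hup := rho_up ρ hgap
  have hsymm_low : ∀ c : Fin n, n ≤ (c : ℕ) + (ρ.symm c : ℕ) + 2 := by
    intro c
    have := hlow (ρ.symm c)
    simpa using this
  have hsymm_up : ∀ c : Fin n, (c : ℕ) + (ρ.symm c : ℕ) ≤ n := by
    intro c
    have := hup (ρ.symm c)
    simpa using this
  -- rule (i)
  have rule1 : ∀ c : Fin n, n ≤ (f c : ℕ) + (c : ℕ) + 2 ∧ (f c : ℕ) + (c : ℕ) ≤ n := by
    intro c
    constructor
    · by_contra hcon
      push_neg at hcon
      have hlt : ((f c : Fin n) : ℕ) < (ρ.symm c : ℕ) := by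
        have := hsymm_low c
        omega
      have h2 := key2 c (f c) le_rfl hlt
      have h3 := hlow (f c)
      omega
    · have := key1 c
      have := hsymm_up c
      omega
  intro c
  refine ⟨(rule1 c).1, (rule1 c).2, ?_, ?_⟩
  · -- rule (ii)
    intro h2 h'
    by_contra hcon
    push_neg at hcon
    set c1 : Fin n := ⟨(c : ℕ) + 1, h'⟩ with hc1def
    have hc1v : (c1 : ℕ) = (c : ℕ) + 1 := rfl
    have hlb := (rule1 c1).1
    have hfc1 : (f c1 : ℕ) + (c : ℕ) + 3 = n := by omega
    have hfcv : (f c : ℕ) = n - (c : ℕ) - 2 := by omega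
    -- car c parks at its preferred spot n - c - 2
    have hspc : (ρ.symm c : ℕ) = n - (c : ℕ) - 2 := by
      by_contra hne
      have hlt : ((f c : Fin n) : ℕ) < (ρ.symm c : ℕ) := by
        have := key1 c; omega
      have hk2 := key2 c (f c) le_rfl hlt
      have hlo := hlow (f c)
      omega
    have hρ1 : (ρ ⟨n - (c : ℕ) - 2, by omega⟩ : ℕ) = (c : ℕ) := by
      have he : (⟨n - (c : ℕ) - 2, by omega⟩ : Fin n) = ρ.symm c := by
        ext
        show n - (c : ℕ) - 2 = (ρ.symm c : ℕ)
        omega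
      rw [he]
      simp
    -- car c+1 parks at its preferred spot n - c - 3
    have hspc1 : (ρ.symm c1 : ℕ) = n - (c : ℕ) - 3 := by
      by_contra hne
      have hlt : ((f c1 : Fin n) : ℕ) < (ρ.symm c1 : ℕ) := by
        have := key1 c1
        have := hsymm_low c1
        omega
      have hk2 := key2 c1 (f c1) le_rfl hlt
      have hlo := hlow (f c1)
      omega
    have hρ2 : (ρ ⟨n - (c : ℕ) - 3, by omega⟩ : ℕ) = (c : ℕ) + 1 := by
      have he : (⟨n - (c : ℕ) - 3, by omega⟩ : Fin n) = ρ.symm c1 := by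
        ext
        show n - (c : ℕ) - 3 = (ρ.symm c1 : ℕ)
        omega
      rw [he]
      simp [hc1v]
    exact chainQ ρ hgap (c : ℕ) c rfl (by omega) (by omega) (by omega) hρ2 hρ1
  · -- rule (iii)
    intro hn
    have hc1 : 1 ≤ (c : ℕ) := by
      have := (f c).isLt
      omega
    refine ⟨by omega, hc1, ?_⟩
    -- car c parks at its preferred spot n - c
    have hspc : (ρ.symm c : ℕ) = n - (c : ℕ) := by
      have h1 := key1 c
      have h2 := hsymm_up c
      omega
    have hρc : (ρ ⟨n - (c : ℕ), by omega⟩ : ℕ) = (c : ℕ) := by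
      have he : (⟨n - (c : ℕ), by omega⟩ : Fin n) = ρ.symm c := by
        ext
        show n - (c : ℕ) = (ρ.symm c : ℕ)
        omega
      rw [he]
      simp
    -- the spot n - c - 1
    have hm : n - (c : ℕ) - 1 < n := by omega
    have hlom := hlow ⟨n - (c : ℕ) - 1, hm⟩
    have hupm := hup ⟨n - (c : ℕ) - 1, hm⟩
    have hmv : ((⟨n - (c : ℕ) - 1, hm⟩ : Fin n) : ℕ) = n - (c : ℕ) - 1 := rfl
    rw [hmv] at hlom hupm
    have hnec : (ρ ⟨n - (c : ℕ) - 1, hm⟩ : ℕ) ≠ (c : ℕ) := by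
      intro he
      exact rho_val_ne (a := (⟨n - (c : ℕ) - 1, hm⟩ : Fin n)) (b := ⟨n - (c : ℕ), by omega⟩)
        (by rw [hmv]; show _ ≠ n - (c : ℕ); omega) (by rw [he, hρc])
    have hnec1 : (ρ ⟨n - (c : ℕ) - 1, hm⟩ : ℕ) ≠ (c : ℕ) + 1 := by
      intro he
      exact chainB ρ hgap (c : ℕ) c rfl hc1 hm (by omega) he hρc
    have hρm : (ρ ⟨n - (c : ℕ) - 1, hm⟩ : ℕ) = (c : ℕ) - 1 := by omega
    -- car c - 1 is at spot n - c - 1, and parked at its preference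
    have hd : (c : ℕ) - 1 < n := by omega
    have hsd : (ρ.symm ⟨(c : ℕ) - 1, hd⟩ : ℕ) = n - (c : ℕ) - 1 := by
      have : ρ.symm ⟨(c : ℕ) - 1, hd⟩ = ⟨n - (c : ℕ) - 1, hm⟩ := by
        apply ρ.injective
        simp
        apply Fin.ext
        exact hρm.symm
      rw [this]
    have hflow := (rule1 ⟨(c : ℕ) - 1, hd⟩).1
    have hfup := key1 ⟨(c : ℕ) - 1, hd⟩
    rw [hsd] at hfup
    have hdv : ((⟨(c : ℕ) - 1, hd⟩ : Fin n) : ℕ) = (c : ℕ) - 1 := rfl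
    rw [hdv] at hflow
    omega

end Part4


section Part5

lemma pk_eq_card_CC (n : ℕ) :
    pk n [p123, p132, p213] = Nat.card {f : Fin n → Fin n // CC f} := by
  apply Nat.card_congr
  apply Equiv.subtypeEquivRight
  intro f
  constructor
  · rintro ⟨hpf, ρ, hpp, hav⟩
    exact part4_main f ρ hpp (gap2_of_avoids ρ hav)
  · intro hC
    obtain ⟨hpf, ρ, hpp, hgap⟩ := part3_main f hC
    exact ⟨hpf, ρ, hpp, avoids_of_gap2 ρ hgap⟩

lemma card_CC_zero : Nat.card {f : Fin 0 → Fin 0 // CC f} = 1 := by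
  have : Unique {f : Fin 0 → Fin 0 // CC f} := {
    default := ⟨fun x => x.elim0, fun c => c.elim0⟩
    uniq := fun ⟨f, hf⟩ => by
      ext c
      exact c.elim0 }
  exact Nat.card_unique

lemma card_CC_one : Nat.card {f : Fin 1 → Fin 1 // CC f} = 1 := by
  have : Unique {f : Fin 1 → Fin 1 // CC f} := {
    default := ⟨fun _ => 0, by
      intro c
      refine ⟨by omega, by omega, ?_, ?_⟩
      · intro h; omega
      · intro h
        exfalso
        have h0 : ((0 : Fin 1) : ℕ) = 0 := rfl
        have hc := c.isLt
        omega⟩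
    uniq := fun ⟨f, hf⟩ => by
      apply Subtype.ext
      funext c
      apply Fin.ext
      have h1 := (f c).isLt
      have h2 : ((0 : Fin 1) : ℕ) = 0 := rfl
      omega }
  exact Nat.card_unique

lemma f_congr {n : ℕ} (f : Fin n → Fin n) {a b : ℕ} (ha : a < n) (hb : b < n) (hab : a = b) :
    (f ⟨a, ha⟩ : ℕ) = (f ⟨b, hb⟩ : ℕ) := by subst hab; rfl

lemma val_zero' (n : ℕ) : ((0 : Fin (n + 1)) : ℕ) = 0 := rfl

lemma tail_lt {n : ℕ} {f : Fin (n + 1) → Fin (n + 1)} (hC : CC f) (h0 : (f 0 : ℕ) = n)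
    (c : Fin n) : (f ⟨(c : ℕ) + 1, by omega⟩ : ℕ) < n := by
  obtain ⟨h1, h2, h3, h4⟩ := hC ⟨(c : ℕ) + 1, by omega⟩
  have hv : ((⟨(c : ℕ) + 1, by omega⟩ : Fin (n + 1)) : ℕ) = (c : ℕ) + 1 := rfl
  rw [hv] at h2 h4
  by_contra hge
  push_neg at hge
  obtain ⟨h', -, heq⟩ := h4 (by omega)
  have he : (⟨(c : ℕ) + 1 - 1, h'⟩ : Fin (n + 1)) = 0 := by
    apply Fin.ext
    rw [val_zero']
    show (c : ℕ) + 1 - 1 = 0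
    omega
  rw [he, h0] at heq
  omega

/-- Remove the first car (which must prefer the top spot). -/
def shiftDown {n : ℕ} (f : Fin (n + 1) → Fin (n + 1)) (hC : CC f) (h0 : (f 0 : ℕ) = n) :
    Fin n → Fin n := fun c => ⟨(f ⟨(c : ℕ) + 1, by omega⟩ : ℕ), tail_lt hC h0 c⟩

lemma CC_shiftDown {n : ℕ} {f : Fin (n + 1) → Fin (n + 1)} (hC : CC f) (h0 : (f 0 : ℕ) = n) :
    CC (shiftDown f hC h0) := by
  intro c
  have hgv : ∀ (c' : Fin n), (shiftDown f hC h0 c' : ℕ) = (f ⟨(c' : ℕ) + 1, by omega⟩ : ℕ) :=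
    fun _ => rfl
  obtain ⟨h1, h2, h3, h4⟩ := hC ⟨(c : ℕ) + 1, by omega⟩
  have hv : ((⟨(c : ℕ) + 1, by omega⟩ : Fin (n + 1)) : ℕ) = (c : ℕ) + 1 := rfl
  rw [hv] at h1 h2 h3 h4
  rw [← hgv c] at h1 h2 h3 h4
  refine ⟨by omega, by omega, ?_, ?_⟩
  · intro he h'
    have := h3 (by omega) (by omega)
    rw [hgv ⟨(c : ℕ) + 1, h'⟩]
    have hal : (f ⟨(c : ℕ) + 1 + 1, by omega⟩ : ℕ) =
        (f ⟨((⟨(c : ℕ) + 1, h'⟩ : Fin n) : ℕ) + 1, by omega⟩ : ℕ) :=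
      f_congr f _ _ rfl
    omega
  · intro he
    obtain ⟨h', -, heq⟩ := h4 (by omega)
    have hc1 : 1 ≤ (c : ℕ) := by
      by_contra hc0
      push_neg at hc0
      have he0 : (⟨(c : ℕ) + 1 - 1, h'⟩ : Fin (n + 1)) = 0 := by
        apply Fin.ext
        rw [val_zero']
        omega
      rw [he0, h0] at heq
      omega
    refine ⟨by omega, hc1, ?_⟩
    rw [hgv ⟨(c : ℕ) - 1, by omega⟩]
    have hal : (f ⟨(c : ℕ) + 1 - 1, h'⟩ : ℕ) =
        (f ⟨((⟨(c : ℕ) - 1, by omega⟩ : Fin n) : ℕ) + 1, by omega⟩ : ℕ) :=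
      f_congr f _ _ (by show (c : ℕ) + 1 - 1 = (c : ℕ) - 1 + 1; omega)
    omega

/-- Prepend a car preferring the top spot. -/
def shiftUp {n : ℕ} (g : Fin n → Fin n) : Fin (n + 1) → Fin (n + 1) := fun c =>
  if h : (c : ℕ) = 0 then ⟨n, by omega⟩
  else ⟨(g ⟨(c : ℕ) - 1, by omega⟩ : ℕ), by
    have := (g ⟨(c : ℕ) - 1, by omega⟩).isLt; omega⟩

lemma shiftUp_zero {n : ℕ} (g : Fin n → Fin n) {c : Fin (n + 1)} (h : (c : ℕ) = 0) :
    (shiftUp g c : ℕ) = n := by simp [shiftUp, h]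

lemma shiftUp_pos {n : ℕ} (g : Fin n → Fin n) {c : Fin (n + 1)} (h : (c : ℕ) ≠ 0)
    (hlt : (c : ℕ) - 1 < n) :
    (shiftUp g c : ℕ) = (g ⟨(c : ℕ) - 1, hlt⟩ : ℕ) := by simp [shiftUp, h]

set_option maxHeartbeats 1000000 in
lemma CC_shiftUp {n : ℕ} {g : Fin n → Fin n} (hC : CC g) : CC (shiftUp g) := by
  intro c
  by_cases hc0 : (c : ℕ) = 0
  · have hval := shiftUp_zero g hc0
    refine ⟨by omega, by omega, ?_, ?_⟩
    · intro he h'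
      omega
    · intro he
      omega
  · have hlt : (c : ℕ) - 1 < n := by have := c.isLt; omega
    rw [shiftUp_pos g hc0 hlt]
    obtain ⟨h1, h2, h3, h4⟩ := hC ⟨(c : ℕ) - 1, hlt⟩
    have hv : ((⟨(c : ℕ) - 1, hlt⟩ : Fin n) : ℕ) = (c : ℕ) - 1 := rfl
    rw [hv] at h1 h2 h3 h4
    refine ⟨by omega, by omega, ?_, ?_⟩
    · intro he h'
      have hres := h3 (by omega) (by omega)
      have hne : ((⟨(c : ℕ) + 1, h'⟩ : Fin (n + 1)) : ℕ) ≠ 0 := by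
        show (c : ℕ) + 1 ≠ 0; omega
      rw [shiftUp_pos g hne (by show (c : ℕ) + 1 - 1 < n; omega)]
      have hal : (g ⟨(c : ℕ) - 1 + 1, by omega⟩ : ℕ) =
          (g ⟨((⟨(c : ℕ) + 1, h'⟩ : Fin (n + 1)) : ℕ) - 1, by show (c:ℕ)+1-1 < n; omega⟩ : ℕ) :=
        f_congr g _ _ (by show (c : ℕ) - 1 + 1 = (c : ℕ) + 1 - 1; omega)
      omega
    · intro he
      rcases Nat.lt_or_ge (c : ℕ) 2 with hc2 | hc2
      · exfalso
        have := (g ⟨(c : ℕ) - 1, hlt⟩).isLt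
        omega
      · obtain ⟨h'', hge1, heq⟩ := h4 (by omega)
        refine ⟨by omega, by omega, ?_⟩
        have hne : ((⟨(c : ℕ) - 1, by omega⟩ : Fin (n + 1)) : ℕ) ≠ 0 := by
          show (c : ℕ) - 1 ≠ 0; omega
        rw [shiftUp_pos g hne (by show (c : ℕ) - 1 - 1 < n; omega)]
        have hal : (g ⟨(c : ℕ) - 1 - 1, h''⟩ : ℕ) =
            (g ⟨((⟨(c : ℕ) - 1, by omega⟩ : Fin (n + 1)) : ℕ) - 1,
              by show (c:ℕ)-1-1 < n; omega⟩ : ℕ) :=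
          f_congr g _ _ rfl
        omega

def equiv1 (n : ℕ) :
    {f : Fin (n + 1) → Fin (n + 1) // CC f ∧ (f 0 : ℕ) = n} ≃ {g : Fin n → Fin n // CC g} where
  toFun F := ⟨shiftDown F.1 F.2.1 F.2.2, CC_shiftDown F.2.1 F.2.2⟩
  invFun G := ⟨shiftUp G.1, CC_shiftUp G.2, shiftUp_zero G.1 (val_zero' n)⟩
  left_inv F := by
    apply Subtype.ext
    funext c
    apply Fin.ext
    by_cases hc0 : (c : ℕ) = 0
    · rw [shiftUp_zero _ hc0]
      have : c = 0 := Fin.ext (by rw [val_zero']; exact hc0)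
      rw [this, F.2.2]
    · have hlt : (c : ℕ) - 1 < n := by have := c.isLt; omega
      rw [shiftUp_pos _ hc0 hlt]
      show (F.1 ⟨((⟨(c : ℕ) - 1, hlt⟩ : Fin n) : ℕ) + 1, by omega⟩ : ℕ) = (F.1 c : ℕ)
      have : (⟨((⟨(c : ℕ) - 1, hlt⟩ : Fin n) : ℕ) + 1, by omega⟩ : Fin (n + 1)) = c := by
        apply Fin.ext
        show (c : ℕ) - 1 + 1 = (c : ℕ)
        omega
      rw [this]
  right_inv G := by
    apply Subtype.ext
    funext c
    apply Fin.ext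
    show (shiftUp G.1 ⟨(c : ℕ) + 1, by omega⟩ : ℕ) = (G.1 c : ℕ)
    have hne : ((⟨(c : ℕ) + 1, by omega⟩ : Fin (n + 1)) : ℕ) ≠ 0 := by
      show (c : ℕ) + 1 ≠ 0; omega
    rw [shiftUp_pos _ hne (by show (c : ℕ) + 1 - 1 < n; omega)]
    congr 1

lemma f1_facts {n : ℕ} {f : Fin (n + 2) → Fin (n + 2)} (hC : CC f) (h0 : (f 0 : ℕ) = n) :
    n ≤ (f ⟨1, by omega⟩ : ℕ) ∧ (f ⟨1, by omega⟩ : ℕ) ≤ n + 1 := by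
  have hup := (hC ⟨1, by omega⟩).2.1
  have hv1 : ((⟨1, by omega⟩ : Fin (n + 2)) : ℕ) = 1 := rfl
  rw [hv1] at hup
  have h3 := (hC 0).2.2.1
  have hv0 : ((0 : Fin (n + 2)) : ℕ) = 0 := rfl
  rw [hv0, h0] at h3
  have hres := h3 (by omega) (by omega)
  have hal : (f ⟨0 + 1, by omega⟩ : ℕ) = (f ⟨1, by omega⟩ : ℕ) := f_congr f _ _ rfl
  omega

lemma tail2_lt {n : ℕ} {f : Fin (n + 2) → Fin (n + 2)} (hC : CC f) (h0 : (f 0 : ℕ) = n)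
    (c : Fin n) : (f ⟨(c : ℕ) + 2, by omega⟩ : ℕ) < n := by
  obtain ⟨h1, h2, h3, h4⟩ := hC ⟨(c : ℕ) + 2, by omega⟩
  have hv : ((⟨(c : ℕ) + 2, by omega⟩ : Fin (n + 2)) : ℕ) = (c : ℕ) + 2 := rfl
  rw [hv] at h2 h4
  by_contra hge
  push_neg at hge
  obtain ⟨h', -, heq⟩ := h4 (by omega)
  have hc0 : (c : ℕ) = 0 := by omega
  have hal : (f ⟨(c : ℕ) + 2 - 1, h'⟩ : ℕ) = (f ⟨1, by omega⟩ : ℕ) :=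
    f_congr f _ _ (by omega)
  have := (f1_facts hC h0).1
  omega

/-- Remove the first two cars (a block). -/
def shiftDown2 {n : ℕ} (f : Fin (n + 2) → Fin (n + 2)) (hC : CC f) (h0 : (f 0 : ℕ) = n) :
    Fin n → Fin n := fun c => ⟨(f ⟨(c : ℕ) + 2, by omega⟩ : ℕ), tail2_lt hC h0 c⟩

lemma CC_shiftDown2 {n : ℕ} {f : Fin (n + 2) → Fin (n + 2)} (hC : CC f) (h0 : (f 0 : ℕ) = n) :
    CC (shiftDown2 f hC h0) := by
  intro c
  have hgv : ∀ (c' : Fin n), (shiftDown2 f hC h0 c' : ℕ) = (f ⟨(c' : ℕ) + 2, by omega⟩ : ℕ) :=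
    fun _ => rfl
  obtain ⟨h1, h2, h3, h4⟩ := hC ⟨(c : ℕ) + 2, by omega⟩
  have hv : ((⟨(c : ℕ) + 2, by omega⟩ : Fin (n + 2)) : ℕ) = (c : ℕ) + 2 := rfl
  rw [hv] at h1 h2 h3 h4
  rw [← hgv c] at h1 h2 h3 h4
  refine ⟨by omega, by omega, ?_, ?_⟩
  · intro he h'
    have hres := h3 (by omega) (by omega)
    rw [hgv ⟨(c : ℕ) + 1, h'⟩]
    have hal : (f ⟨(c : ℕ) + 2 + 1, by omega⟩ : ℕ) =
        (f ⟨((⟨(c : ℕ) + 1, h'⟩ : Fin n) : ℕ) + 2, by omega⟩ : ℕ) :=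
      f_congr f _ _ rfl
    omega
  · intro he
    obtain ⟨h', -, heq⟩ := h4 (by omega)
    have hc1 : 1 ≤ (c : ℕ) := by
      by_contra hc0
      push_neg at hc0
      have hal : (f ⟨(c : ℕ) + 2 - 1, h'⟩ : ℕ) = (f ⟨1, by omega⟩ : ℕ) :=
        f_congr f _ _ (by omega)
      have := (f1_facts hC h0).1
      omega
    refine ⟨by omega, hc1, ?_⟩
    rw [hgv ⟨(c : ℕ) - 1, by omega⟩]
    have hal : (f ⟨(c : ℕ) + 2 - 1, h'⟩ : ℕ) =
        (f ⟨((⟨(c : ℕ) - 1, by omega⟩ : Fin n) : ℕ) + 2, by omega⟩ : ℕ) :=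
      f_congr f _ _ (by show (c : ℕ) + 2 - 1 = (c : ℕ) - 1 + 2; omega)
    omega

/-- Prepend a block of two cars. -/
def shiftUp2 {n : ℕ} (b : Bool) (g : Fin n → Fin n) : Fin (n + 2) → Fin (n + 2) := fun c =>
  if h0 : (c : ℕ) = 0 then ⟨n, by omega⟩
  else if h1 : (c : ℕ) = 1 then (if b then ⟨n + 1, by omega⟩ else ⟨n, by omega⟩)
  else ⟨(g ⟨(c : ℕ) - 2, by have := c.isLt; omega⟩ : ℕ), by
    have := (g ⟨(c : ℕ) - 2, by have := c.isLt; omega⟩).isLt; omega⟩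

lemma shiftUp2_zero {n : ℕ} (b : Bool) (g : Fin n → Fin n) {c : Fin (n + 2)}
    (h : (c : ℕ) = 0) : (shiftUp2 b g c : ℕ) = n := by simp [shiftUp2, h]

lemma shiftUp2_one {n : ℕ} (b : Bool) (g : Fin n → Fin n) {c : Fin (n + 2)}
    (h : (c : ℕ) = 1) : (shiftUp2 b g c : ℕ) = if b then n + 1 else n := by
  rcases b with _ | _ <;> simp [shiftUp2, h]

lemma shiftUp2_big {n : ℕ} (b : Bool) (g : Fin n → Fin n) {c : Fin (n + 2)}
    (h : 2 ≤ (c : ℕ)) (hlt : (c : ℕ) - 2 < n) :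
    (shiftUp2 b g c : ℕ) = (g ⟨(c : ℕ) - 2, hlt⟩ : ℕ) := by
  have h0 : (c : ℕ) ≠ 0 := by omega
  have h1 : (c : ℕ) ≠ 1 := by omega
  simp [shiftUp2, h0, h1]

set_option maxHeartbeats 1000000 in
lemma CC_shiftUp2 {n : ℕ} (b : Bool) {g : Fin n → Fin n} (hC : CC g) : CC (shiftUp2 b g) := by
  intro c
  rcases Nat.lt_or_ge (c : ℕ) 2 with hsm | hbig
  · by_cases hc0 : (c : ℕ) = 0
    · have hval := shiftUp2_zero b g hc0
      refine ⟨by omega, by omega, ?_, ?_⟩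
      · intro he h'
        have hv1 : ((⟨(c : ℕ) + 1, h'⟩ : Fin (n + 2)) : ℕ) = 1 := by
          show (c : ℕ) + 1 = 1; omega
        have := shiftUp2_one b g hv1
        rcases b with _ | _ <;> simp at this <;> omega
      · intro he
        omega
    · have hc1 : (c : ℕ) = 1 := by omega
      have hval := shiftUp2_one b g hc1
      have hvb : n ≤ (shiftUp2 b g c : ℕ) ∧ (shiftUp2 b g c : ℕ) ≤ n + 1 := by
        rcases b with _ | _ <;> simp at hval <;> omega
      refine ⟨by omega, by omega, ?_, ?_⟩
      · intro he h'
        omega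
      · intro he
        refine ⟨by omega, by omega, ?_⟩
        have hv0 : ((⟨(c : ℕ) - 1, by omega⟩ : Fin (n + 2)) : ℕ) = 0 := by
          show (c : ℕ) - 1 = 0; omega
        have := shiftUp2_zero b g hv0
        omega
  · have hlt : (c : ℕ) - 2 < n := by have := c.isLt; omega
    rw [shiftUp2_big b g hbig hlt]
    obtain ⟨h1, h2, h3, h4⟩ := hC ⟨(c : ℕ) - 2, hlt⟩
    have hv : ((⟨(c : ℕ) - 2, hlt⟩ : Fin n) : ℕ) = (c : ℕ) - 2 := rfl
    rw [hv] at h1 h2 h3 h4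
    refine ⟨by omega, by omega, ?_, ?_⟩
    · intro he h'
      have hres := h3 (by omega) (by omega)
      have hge2 : 2 ≤ ((⟨(c : ℕ) + 1, h'⟩ : Fin (n + 2)) : ℕ) := by
        show 2 ≤ (c : ℕ) + 1; omega
      rw [shiftUp2_big b g hge2 (by show (c : ℕ) + 1 - 2 < n; omega)]
      have hal : (g ⟨(c : ℕ) - 2 + 1, by omega⟩ : ℕ) =
          (g ⟨((⟨(c : ℕ) + 1, h'⟩ : Fin (n + 2)) : ℕ) - 2,
            by show (c : ℕ) + 1 - 2 < n; omega⟩ : ℕ) :=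
        f_congr g _ _ (by show (c : ℕ) - 2 + 1 = (c : ℕ) + 1 - 2; omega)
      omega
    · intro he
      rcases Nat.lt_or_ge (c : ℕ) 3 with hc3 | hc3
      · exfalso
        have := (g ⟨(c : ℕ) - 2, hlt⟩).isLt
        omega
      · obtain ⟨h'', hge1, heq⟩ := h4 (by omega)
        refine ⟨by omega, by omega, ?_⟩
        have hge2 : 2 ≤ ((⟨(c : ℕ) - 1, by omega⟩ : Fin (n + 2)) : ℕ) := by
          show 2 ≤ (c : ℕ) - 1; omega
        rw [shiftUp2_big b g hge2 (by show (c : ℕ) - 1 - 2 < n; omega)]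
        have hal : (g ⟨(c : ℕ) - 2 - 1, h''⟩ : ℕ) =
            (g ⟨((⟨(c : ℕ) - 1, by omega⟩ : Fin (n + 2)) : ℕ) - 2,
              by show (c : ℕ) - 1 - 2 < n; omega⟩ : ℕ) :=
          f_congr g _ _ (by show (c : ℕ) - 2 - 1 = (c : ℕ) - 1 - 2; omega)
        omega

set_option maxHeartbeats 1000000 in
def equiv2 (n : ℕ) :
    {f : Fin (n + 2) → Fin (n + 2) // CC f ∧ (f 0 : ℕ) = n} ≃
      Bool × {g : Fin n → Fin n // CC g} where
  toFun F := (decide ((F.1 ⟨1, by omega⟩ : ℕ) = n + 1),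
    ⟨shiftDown2 F.1 F.2.1 F.2.2, CC_shiftDown2 F.2.1 F.2.2⟩)
  invFun BG := ⟨shiftUp2 BG.1 BG.2.1, CC_shiftUp2 BG.1 BG.2.2,
    shiftUp2_zero BG.1 BG.2.1 (by rw [val_zero'])⟩
  left_inv F := by
    apply Subtype.ext
    funext c
    apply Fin.ext
    rcases Nat.lt_or_ge (c : ℕ) 2 with hsm | hbig
    · by_cases hc0 : (c : ℕ) = 0
      · rw [shiftUp2_zero _ _ hc0]
        have : c = 0 := Fin.ext (by rw [val_zero']; exact hc0)
        rw [this, F.2.2]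
      · have hc1 : (c : ℕ) = 1 := by omega
        rw [shiftUp2_one _ _ hc1]
        have hce : c = ⟨1, by omega⟩ := Fin.ext hc1
        rw [hce]
        have hf1 := f1_facts F.2.1 F.2.2
        by_cases hb : (F.1 ⟨1, by omega⟩ : ℕ) = n + 1
        · rw [if_pos (by exact_mod_cast (decide_eq_true hb))]
          exact hb.symm
        · rw [if_neg (fun h => hb (of_decide_eq_true h))]
          omega
    · have hlt : (c : ℕ) - 2 < n := by have := c.isLt; omega
      rw [shiftUp2_big _ _ hbig hlt]
      show (F.1 ⟨((⟨(c : ℕ) - 2, hlt⟩ : Fin n) : ℕ) + 2, by omega⟩ : ℕ) = (F.1 c : ℕ)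
      have : (⟨((⟨(c : ℕ) - 2, hlt⟩ : Fin n) : ℕ) + 2, by omega⟩ : Fin (n + 2)) = c := by
        apply Fin.ext
        show (c : ℕ) - 2 + 2 = (c : ℕ)
        omega
      rw [this]
  right_inv BG := by
    rcases BG with ⟨b, G⟩
    refine Prod.ext ?_ ?_
    · show decide ((shiftUp2 b G.1 ⟨1, by omega⟩ : ℕ) = n + 1) = b
      rw [shiftUp2_one b G.1 (show ((⟨1, by omega⟩ : Fin (n + 2)) : ℕ) = 1 from rfl)]
      rcases b with _ | _ <;> simp
    · apply Subtype.ext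
      funext c
      apply Fin.ext
      show (shiftUp2 b G.1 ⟨(c : ℕ) + 2, by omega⟩ : ℕ) = (G.1 c : ℕ)
      have hge2 : 2 ≤ ((⟨(c : ℕ) + 2, by omega⟩ : Fin (n + 2)) : ℕ) := by
        show 2 ≤ (c : ℕ) + 2; omega
      rw [shiftUp2_big b G.1 hge2 (by show (c : ℕ) + 2 - 2 < n; omega)]
      congr 1

def splitEquiv (n : ℕ) :
    {f : Fin (n + 2) → Fin (n + 2) // CC f} ≃
      ({f : Fin (n + 2) → Fin (n + 2) // CC f ∧ (f 0 : ℕ) = n + 1} ⊕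
        {f : Fin (n + 2) → Fin (n + 2) // CC f ∧ (f 0 : ℕ) = n}) where
  toFun F := if h : (F.1 0 : ℕ) = n + 1 then Sum.inl ⟨F.1, F.2, h⟩ else
    Sum.inr ⟨F.1, F.2, by
      have h1 := (F.2 0).1
      have h2 := (F.2 0).2.1
      rw [val_zero' (n + 1)] at h1 h2
      omega⟩
  invFun := Sum.elim (fun F => ⟨F.1, F.2.1⟩) (fun F => ⟨F.1, F.2.1⟩)
  left_inv F := by
    by_cases h : (F.1 0 : ℕ) = n + 1 <;> simp [h]
  right_inv S := by
    rcases S with F | F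
    · simp [F.2.2]
    · have hne : ¬ ((F.1 0 : ℕ) = n + 1) := by
        have := F.2.2
        omega
      simp [hne]

lemma card_CC_rec (n : ℕ) :
    Nat.card {f : Fin (n + 2) → Fin (n + 2) // CC f} =
      Nat.card {g : Fin (n + 1) → Fin (n + 1) // CC g} +
        2 * Nat.card {g : Fin n → Fin n // CC g} := by
  rw [Nat.card_congr (splitEquiv n), Nat.card_sum,
    Nat.card_congr (equiv1 (n + 1)), Nat.card_congr (equiv2 n), Nat.card_prod]
  congr 1
  simp

def J : ℕ → ℕ
  | 0 => 1
  | 1 => 1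
  | n + 2 => J (n + 1) + 2 * J n

lemma card_CC_J : ∀ n : ℕ, Nat.card {f : Fin n → Fin n // CC f} = J n := by
  intro n
  induction n using Nat.strong_induction_on with
  | _ n ih =>
    match n with
    | 0 => exact card_CC_zero
    | 1 => exact card_CC_one
    | (m + 2) =>
      rw [card_CC_rec m, ih (m + 1) (by omega), ih m (by omega)]
      rfl

lemma J_formula : ∀ n : ℕ, (3 * J n : ℤ) = 2 * 2 ^ n + (-1) ^ n := by
  intro n
  induction n using Nat.strong_induction_on with
  | _ n ih =>
    match n with
    | 0 => simp [J]
    | 1 => norm_num [J]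
    | (m + 2) =>
      have h1 := ih (m + 1) (by omega)
      have h2 := ih m (by omega)
      have hJ : (J (m + 2) : ℤ) = (J (m + 1) : ℤ) + 2 * (J m : ℤ) := by
        show ((J (m + 1) + 2 * J m : ℕ) : ℤ) = _
        push_cast
        ring
      rw [hJ]
      have he : (3 : ℤ) * ((J (m + 1) : ℤ) + 2 * (J m : ℤ)) =
          3 * (J (m + 1) : ℤ) + 2 * (3 * (J m : ℤ)) := by ring
      rw [he, h1, h2, pow_succ, pow_succ, pow_succ, pow_succ]
      ring

end Part5

/-- `pk n (123,132,213) = (2/3)·2^n + (1/3)·(−1)^n`, stated after clearing denominators. -/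
theorem stmt9 (n : ℕ) (hn : 1 ≤ n) :
    (3 * pk n [p123, p132, p213] : ℤ) = 2 * 2 ^ n + (-1) ^ n := by
  rw [pk_eq_card_CC n, card_CC_J n]
  exact J_formula n
end
end

section
/- The number of parking functions of size n whose parking permutation avoids 132, 213, and 231 equals ∑_{k=1}^n k!. -/
open Finset

noncomputable section

namespace ParkingDev

/-- The function underlying the target permutation: `v` top values decreasing, then increasing. -/
def rhoFun (n v : ℕ) (s : Fin n) : Fin n :=
  if s.val < v then ⟨n - 1 - s.val, by have := s.isLt; omega⟩
  else ⟨s.val - v, by have := s.isLt; omega⟩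

def rhoInv (n v : ℕ) (t : Fin n) : Fin n :=
  if h : n - v ≤ t.val then ⟨n - 1 - t.val, by have := t.isLt; omega⟩
  else ⟨t.val + v, by have := t.isLt; omega⟩

def rhoPerm (n v : ℕ) : Equiv.Perm (Fin n) where
  toFun := rhoFun n v
  invFun := rhoInv n v
  left_inv s := by
    have hs := s.isLt
    unfold rhoFun rhoInv
    by_cases h : s.val < v
    · rw [if_pos h, dif_pos (show n - v ≤ n - 1 - s.val by omega)]
      exact Fin.ext (by simp only [Fin.val_mk]; omega)
    · rw [if_neg h, dif_neg (show ¬ n - v ≤ s.val - v by omega)]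
      exact Fin.ext (by simp only [Fin.val_mk]; omega)
  right_inv t := by
    have ht := t.isLt
    unfold rhoFun rhoInv
    by_cases h : n - v ≤ t.val
    · rw [dif_pos h, if_pos (show n - 1 - t.val < v by omega)]
      exact Fin.ext (by simp only [Fin.val_mk]; omega)
    · rw [dif_neg h, if_neg (show ¬ t.val + v < v by omega)]
      exact Fin.ext (by simp only [Fin.val_mk]; omega)

lemma rhoPerm_apply (n v : ℕ) (s : Fin n) : rhoPerm n v s = rhoFun n v s := rfl

lemma rhoPerm_val_lt (n v : ℕ) (s : Fin n) (h : s.val < v) :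
    (rhoPerm n v s).val = n - 1 - s.val := by
  rw [rhoPerm_apply, rhoFun, if_pos h]

lemma rhoPerm_val_ge (n v : ℕ) (s : Fin n) (h : ¬ s.val < v) :
    (rhoPerm n v s).val = s.val - v := by
  rw [rhoPerm_apply, rhoFun, if_neg h]

lemma rho_lt_iff {n v : ℕ} {s t : Fin n} (hst : s < t) :
    rhoPerm n v s < rhoPerm n v t ↔ v ≤ s.val := by
  have hs := s.isLt; have ht := t.isLt
  have hlt := (Fin.lt_def.mp hst)
  rw [Fin.lt_def]
  by_cases h1 : s.val < v <;> by_cases h2 : t.val < v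
  · rw [rhoPerm_val_lt n v s h1, rhoPerm_val_lt n v t h2]; omega
  · rw [rhoPerm_val_lt n v s h1, rhoPerm_val_ge n v t h2]; omega
  · omega
  · rw [rhoPerm_val_ge n v s h1, rhoPerm_val_ge n v t h2]; omega

/-- the explicit description of the valid parking functions with `f 0 = v`. -/
def CondV (n v : ℕ) (f : Fin n → Fin n) : Prop :=
  ∀ i : Fin n, (i.val < n - v → v ≤ (f i).val ∧ (f i).val ≤ v + i.val) ∧
    (n - v ≤ i.val → (f i).val = n - 1 - i.val)

/-- occupancy after `t` cars have parked, for an `f` satisfying `CondV n v`. -/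
def occV (n v t : ℕ) : Fin n → Option (Fin n) := fun s =>
  if v ≤ s.val ∧ s.val < v + min t (n - v) then some ⟨s.val - v, by have := s.isLt; omega⟩
  else if n - t ≤ s.val ∧ s.val < v then some ⟨n - 1 - s.val, by have := s.isLt; omega⟩
  else none

lemma parkAux_succ_some {n : ℕ} (f : Fin n → Fin n) {t : ℕ} (ht : t < n)
    {o o' : Fin n → Option (Fin n)}
    (h1 : parkAux f t = some o) (h2 : parkAux f (t+1) = some o') :
    ∃ hS : (Finset.univ.filter fun s => f ⟨t, ht⟩ ≤ s ∧ o s = none).Nonempty,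
      o' = Function.update o
        ((Finset.univ.filter fun s => f ⟨t, ht⟩ ≤ s ∧ o s = none).min' hS) (some ⟨t, ht⟩) := by
  rw [parkAux, h1] at h2
  simp only [Option.bind_some, dif_pos ht] at h2
  by_cases hS : (Finset.univ.filter fun s => f ⟨t, ht⟩ ≤ s ∧ o s = none).Nonempty
  · rw [dif_pos hS] at h2
    exact ⟨hS, (Option.some.injEq _ _ ▸ h2).symm⟩
  · rw [dif_neg hS] at h2
    exact absurd h2 (by simp)

theorem parkAux_eq_occV {n v : ℕ} (hv : v < n) {f : Fin n → Fin n} (hf : CondV n v f) :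
    ∀ t, t ≤ n → parkAux f t = some (occV n v t) := by
  intro t
  induction t with
  | zero =>
    intro _
    rw [parkAux]
    congr 1
    funext s
    have hs := s.isLt
    rw [occV, if_neg (by omega), if_neg (by omega)]
  | succ t IH =>
    intro h
    have ht : t < n := h
    rw [parkAux, IH (le_of_lt ht)]
    simp only [Option.bind_some, dif_pos ht]
    rcases Nat.lt_or_ge t (n - v) with hcase | hcase
    · -- small car: parks at spot v + t
      have hmin : min t (n - v) = t := min_eq_left (le_of_lt hcase)
      have hmin' : min (t+1) (n - v) = t + 1 := min_eq_left hcase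
      have hup : (f ⟨t, ht⟩).val ≤ v + t := ((hf ⟨t, ht⟩).1 hcase).2
      have hlow : v ≤ (f ⟨t, ht⟩).val := ((hf ⟨t, ht⟩).1 hcase).1
      set s₀ : Fin n := ⟨v + t, by omega⟩ with hs₀def
      have hval : s₀.val = v + t := rfl
      have hfle : f ⟨t, ht⟩ ≤ s₀ := by rw [Fin.le_def]; omega
      have hnone : occV n v t s₀ = none := by
        simp only [occV]
        rw [if_neg (by rw [hmin]; omega), if_neg (by omega)]
      have hS : (Finset.univ.filter fun s => f ⟨t, ht⟩ ≤ s ∧ occV n v t s = none).Nonempty :=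
        ⟨s₀, Finset.mem_filter.mpr ⟨Finset.mem_univ _, hfle, hnone⟩⟩
      rw [dif_pos hS]
      have hmineq : (Finset.univ.filter fun s => f ⟨t, ht⟩ ≤ s ∧ occV n v t s = none).min' hS = s₀ := by
        refine le_antisymm (Finset.min'_le _ _ (Finset.mem_filter.mpr ⟨Finset.mem_univ _, hfle, hnone⟩)) ?_
        refine Finset.le_min' _ _ _ (fun s hs => ?_)
        obtain ⟨-, hle, hn⟩ := Finset.mem_filter.mp hs
        rw [Fin.le_def] at hle ⊢
        simp only [occV] at hn
        by_cases hA : v ≤ s.val ∧ s.val < v + min t (n - v)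
        · rw [if_pos hA] at hn; exact absurd hn (by simp)
        · rw [hmin] at hA
          by_cases hB : n - t ≤ s.val ∧ s.val < v
          · omega
          · omega
      rw [hmineq]
      congr 1
      funext s
      have hsl := s.isLt
      rw [Function.update_apply]
      by_cases hss : s = s₀
      · rw [if_pos hss, hss]
        simp only [occV]
        rw [if_pos (by rw [hmin']; omega)]
        exact (congrArg some (Fin.ext (by simp only [Fin.val_mk]; omega))).symm
      · rw [if_neg hss]
        have hne : s.val ≠ v + t := fun hh => hss (Fin.ext (by rw [hh, hval]))
        simp only [occV]
        rw [hmin, hmin']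
        split_ifs <;> first | rfl | omega
    · -- big car: parks at spot n - 1 - t
      have hmin : min t (n - v) = n - v := min_eq_right hcase
      have hmin' : min (t+1) (n - v) = n - v := min_eq_right (by omega)
      have hvpos : 1 ≤ v := by omega
      have hfval : (f ⟨t, ht⟩).val = n - 1 - t := (hf ⟨t, ht⟩).2 hcase
      set s₀ : Fin n := ⟨n - 1 - t, by omega⟩ with hs₀def
      have hval : s₀.val = n - 1 - t := rfl
      have hfle : f ⟨t, ht⟩ ≤ s₀ := by rw [Fin.le_def]; omega
      have hnone : occV n v t s₀ = none := by
        simp only [occV]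
        rw [if_neg (by rw [hmin]; omega), if_neg (by omega)]
      have hS : (Finset.univ.filter fun s => f ⟨t, ht⟩ ≤ s ∧ occV n v t s = none).Nonempty :=
        ⟨s₀, Finset.mem_filter.mpr ⟨Finset.mem_univ _, hfle, hnone⟩⟩
      rw [dif_pos hS]
      have hmineq : (Finset.univ.filter fun s => f ⟨t, ht⟩ ≤ s ∧ occV n v t s = none).min' hS = s₀ := by
        refine le_antisymm (Finset.min'_le _ _ (Finset.mem_filter.mpr ⟨Finset.mem_univ _, hfle, hnone⟩)) ?_
        refine Finset.le_min' _ _ _ (fun s hs => ?_)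
        obtain ⟨-, hle, hn⟩ := Finset.mem_filter.mp hs
        rw [Fin.le_def] at hle ⊢
        omega
      rw [hmineq]
      congr 1
      funext s
      have hsl := s.isLt
      rw [Function.update_apply]
      by_cases hss : s = s₀
      · rw [if_pos hss, hss]
        simp only [occV]
        rw [if_neg (by rw [hmin']; omega), if_pos (by omega)]
        exact (congrArg some (Fin.ext (by simp only [Fin.val_mk]; omega))).symm
      · rw [if_neg hss]
        have hne : s.val ≠ n - 1 - t := fun hh => hss (Fin.ext (by rw [hh, hval]))
        simp only [occV]
        rw [hmin, hmin']
        split_ifs <;> first | rfl | omega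

lemma occV_n {n v : ℕ} (hv : v < n) : occV n v n = fun s => some (rhoPerm n v s) := by
  funext s
  have hs := s.isLt
  have hmin : min n (n - v) = n - v := min_eq_right (by omega)
  simp only [occV, hmin]
  by_cases h : s.val < v
  · rw [if_neg (by omega), if_pos (by omega)]
    exact congrArg some (Fin.ext (by rw [rhoPerm_val_lt n v s h]))
  · rw [if_pos (by omega)]
    exact congrArg some (Fin.ext (by rw [rhoPerm_val_ge n v s h]))

lemma isParkingPerm_of_cond {n v : ℕ} (hv : v < n) {f : Fin n → Fin n} (hf : CondV n v f) :
    IsParkingPerm f (rhoPerm n v) := by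
  rw [IsParkingPerm, parkAux_eq_occV hv hf n le_rfl, occV_n hv]

lemma isParkingFunction_of_cond {n v : ℕ} (hv : v < n) {f : Fin n → Fin n} (hf : CondV n v f) :
    IsParkingFunction f := by
  intro i
  have hil := i.isLt
  classical
  set g : Fin (i.val + 1) → Fin n := fun a =>
    if i.val < v then ⟨n - 1 - i.val + a.val, by have := a.isLt; omega⟩
    else if a.val + v ≤ i.val then ⟨a.val, by have := a.isLt; omega⟩
    else ⟨n + a.val - i.val - 1, by have := a.isLt; omega⟩ with hgdef
  have hcard : (Finset.univ : Finset (Fin (i.val+1))).card = i.val + 1 := by simp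
  rw [← hcard]
  refine Finset.card_le_card_of_injOn g (fun a _ => ?_) (fun a _ b _ hab => ?_)
  · refine Finset.mem_filter.mpr ⟨Finset.mem_univ _, ?_⟩
    have hal := a.isLt
    rw [Fin.le_def]
    simp only [hgdef]
    split_ifs with h1 h2
    · have hbig : n - v ≤ n - 1 - i.val + a.val := by omega
      have := (hf ⟨n - 1 - i.val + a.val, by omega⟩).2 hbig
      simp only [Fin.val_mk] at this
      omega
    · have hsmall : (a.val : ℕ) < n - v := by omega
      have := (hf ⟨a.val, by omega⟩).1 hsmall
      simp only [Fin.val_mk] at this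
      omega
    · have hbig : n - v ≤ n + a.val - i.val - 1 := by omega
      have := (hf ⟨n + a.val - i.val - 1, by omega⟩).2 hbig
      simp only [Fin.val_mk] at this
      omega
  · have hal := a.isLt
    have hbl := b.isLt
    simp only [hgdef] at hab
    apply Fin.ext
    split_ifs at hab with h1 h2 h3 h2 h3 <;>
      (have hval := congrArg Fin.val hab; simp only [Fin.val_mk] at hval; omega)

lemma avoids_rho {n v : ℕ} : AvoidsAll (rhoPerm n v) [p132, p213, p231] := by
  intro σ hσ
  rintro ⟨g, hg, hp⟩
  have h01 : g 0 < g 1 := hg (by decide)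
  have h12 : g 1 < g 2 := hg (by decide)
  have h01v : (g 0).val < (g 1).val := Fin.lt_def.mp h01
  simp only [List.mem_cons, List.not_mem_nil, or_false] at hσ
  rcases hσ with rfl | rfl | rfl
  · have a1 : rhoPerm n v (g 0) < rhoPerm n v (g 1) := (hp 0 1).1 (by decide)
    have a2 : rhoPerm n v (g 2) < rhoPerm n v (g 1) := (hp 2 1).1 (by decide)
    have hv0 : v ≤ (g 0).val := (rho_lt_iff h01).1 a1
    have : rhoPerm n v (g 1) < rhoPerm n v (g 2) := (rho_lt_iff h12).2 (by omega)
    exact absurd a2 (lt_asymm this)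
  · have a1 : rhoPerm n v (g 1) < rhoPerm n v (g 0) := (hp 1 0).1 (by decide)
    have a2 : rhoPerm n v (g 0) < rhoPerm n v (g 2) := (hp 0 2).1 (by decide)
    have hv0 : v ≤ (g 0).val := (rho_lt_iff (lt_trans h01 h12)).1 a2
    have : rhoPerm n v (g 0) < rhoPerm n v (g 1) := (rho_lt_iff h01).2 hv0
    exact absurd a1 (lt_asymm this)
  · have a1 : rhoPerm n v (g 0) < rhoPerm n v (g 1) := (hp 0 1).1 (by decide)
    have a2 : rhoPerm n v (g 2) < rhoPerm n v (g 1) := (hp 2 1).1 (by decide)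
    have hv0 : v ≤ (g 0).val := (rho_lt_iff h01).1 a1
    have : rhoPerm n v (g 1) < rhoPerm n v (g 2) := (rho_lt_iff h12).2 (by omega)
    exact absurd a2 (lt_asymm this)

lemma strictMono_triple {n : ℕ} {a b c : Fin n} (hab : a < b) (hbc : b < c) :
    StrictMono ![a, b, c] := by
  intro x y hxy
  fin_cases x <;> fin_cases y <;>
    simp_all [Matrix.cons_val_zero, Matrix.cons_val_one, Matrix.head_cons] <;>
    first | exact hab | exact hbc | exact lt_trans hab hbc | exact absurd hxy (by decide)

lemma contains132 {n : ℕ} (ρ : Equiv.Perm (Fin n)) {a b c : Fin n} (hab : a < b) (hbc : b < c)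
    (h1 : ρ a < ρ c) (h2 : ρ c < ρ b) : ContainsPattern ρ p132 := by
  refine ⟨![a, b, c], strictMono_triple hab hbc, fun x y => ?_⟩
  have h3 : ρ a < ρ b := lt_trans h1 h2
  fin_cases x <;> fin_cases y <;>
    simp only [Matrix.cons_val_zero, Matrix.cons_val_one, Matrix.head_cons, Matrix.cons_val_two,
      Matrix.tail_cons] <;>
    first
      | exact iff_of_true (by decide) h1
      | exact iff_of_true (by decide) h2
      | exact iff_of_true (by decide) h3
      | exact iff_of_false (by decide) (lt_irrefl _)
      | exact iff_of_false (by decide) (lt_asymm h1)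
      | exact iff_of_false (by decide) (lt_asymm h2)
      | exact iff_of_false (by decide) (lt_asymm h3)

lemma contains213 {n : ℕ} (ρ : Equiv.Perm (Fin n)) {a b c : Fin n} (hab : a < b) (hbc : b < c)
    (h1 : ρ b < ρ a) (h2 : ρ a < ρ c) : ContainsPattern ρ p213 := by
  refine ⟨![a, b, c], strictMono_triple hab hbc, fun x y => ?_⟩
  have h3 : ρ b < ρ c := lt_trans h1 h2
  fin_cases x <;> fin_cases y <;>
    simp only [Matrix.cons_val_zero, Matrix.cons_val_one, Matrix.head_cons, Matrix.cons_val_two,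
      Matrix.tail_cons] <;>
    first
      | exact iff_of_true (by decide) h1
      | exact iff_of_true (by decide) h2
      | exact iff_of_true (by decide) h3
      | exact iff_of_false (by decide) (lt_irrefl _)
      | exact iff_of_false (by decide) (lt_asymm h1)
      | exact iff_of_false (by decide) (lt_asymm h2)
      | exact iff_of_false (by decide) (lt_asymm h3)

lemma contains231 {n : ℕ} (ρ : Equiv.Perm (Fin n)) {a b c : Fin n} (hab : a < b) (hbc : b < c)
    (h1 : ρ c < ρ a) (h2 : ρ a < ρ b) : ContainsPattern ρ p231 := by
  refine ⟨![a, b, c], strictMono_triple hab hbc, fun x y => ?_⟩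
  have h3 : ρ c < ρ b := lt_trans h1 h2
  fin_cases x <;> fin_cases y <;>
    simp only [Matrix.cons_val_zero, Matrix.cons_val_one, Matrix.head_cons, Matrix.cons_val_two,
      Matrix.tail_cons] <;>
    first
      | exact iff_of_true (by decide) h1
      | exact iff_of_true (by decide) h2
      | exact iff_of_true (by decide) h3
      | exact iff_of_false (by decide) (lt_irrefl _)
      | exact iff_of_false (by decide) (lt_asymm h1)
      | exact iff_of_false (by decide) (lt_asymm h2)
      | exact iff_of_false (by decide) (lt_asymm h3)

lemma perm_eq_of_lt_iff {n : ℕ} (ρ σ : Equiv.Perm (Fin n))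
    (h : ∀ s t : Fin n, ρ s < ρ t ↔ σ s < σ t) : ρ = σ := by
  have hmono : StrictMono ((σ.symm.trans ρ : Equiv.Perm (Fin n)) : Fin n → Fin n) := by
    intro x y hxy
    have : σ (σ.symm x) < σ (σ.symm y) := by simpa using hxy
    exact (h _ _).2 this
  have hid : σ.symm.trans ρ = Equiv.refl (Fin n) := by
    have h2 := Subsingleton.elim (hmono.orderIsoOfSurjective _ (σ.symm.trans ρ).surjective)
      (OrderIso.refl (Fin n))
    ext x
    have := congrFun (OrderIso.ext_iff.mp h2) x
    simp only [StrictMono.coe_orderIsoOfSurjective, OrderIso.refl_apply] at this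
    simp [this]
  refine Equiv.ext fun x => ?_
  have := congrFun (congrArg (fun (e : Equiv.Perm (Fin n)) => (e : Fin n → Fin n)) hid) (σ x)
  simpa using this

lemma rho_of_avoids {n : ℕ} (hn : 0 < n) (ρ : Equiv.Perm (Fin n))
    (hA : AvoidsAll ρ [p132, p213, p231]) : ∃ v : ℕ, v < n ∧ ρ = rhoPerm n v := by
  classical
  have h132 : ¬ ContainsPattern ρ p132 := hA p132 (by simp)
  have h213 : ¬ ContainsPattern ρ p213 := hA p213 (by simp)
  have h231 : ¬ ContainsPattern ρ p231 := hA p231 (by simp)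
  -- (A) : ascent propagates
  have hAsc : ∀ a b c : Fin n, a < b → b < c → ρ a < ρ b → ρ b < ρ c := by
    intro a b c hab hbc h1
    by_contra hcon
    have hne : ρ c ≠ ρ b := fun he => (ne_of_lt hbc).symm (ρ.injective he)
    have h2 : ρ c < ρ b := lt_of_le_of_ne (not_lt.mp hcon) hne
    rcases lt_trichotomy (ρ a) (ρ c) with h3 | h3 | h3
    · exact h132 (contains132 ρ hab hbc h3 h2)
    · exact (ne_of_lt (lt_trans hab hbc)) (ρ.injective h3)
    · exact h231 (contains231 ρ hab hbc h3 h1)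
  -- (B)
  have hB : ∀ a b c : Fin n, a < b → b < c → ρ a < ρ c → ρ a < ρ b := by
    intro a b c hab hbc h1
    by_contra hcon
    have hne : ρ b ≠ ρ a := fun he => (ne_of_lt hab).symm (ρ.injective he)
    have h2 : ρ b < ρ a := lt_of_le_of_ne (not_lt.mp hcon) hne
    exact h213 (contains213 ρ hab hbc h2 h1)
  set Inc : Fin n → Prop := fun s => ∀ t, s < t → ρ s < ρ t with hIncDef
  have hInc_iff : ∀ s t : Fin n, s < t → (ρ s < ρ t ↔ Inc s) := by
    intro s t hst
    constructor
    · intro h u hu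
      rcases lt_trichotomy u t with h3 | h3 | h3
      · exact hB s u t hu h3 h
      · exact h3 ▸ h
      · exact lt_trans h (hAsc s t u hst h3 h)
    · intro h; exact h t hst
  have hIncMono : ∀ s t : Fin n, s ≤ t → Inc s → Inc t := by
    intro s t hst hs
    rcases eq_or_lt_of_le hst with rfl | hlt
    · exact hs
    · intro u hu
      exact hAsc s t u hlt hu (hs t hlt)
  set v : ℕ := (Finset.univ.filter fun s : Fin n => ¬ Inc s).card with hvdef
  have hv_iff : ∀ s : Fin n, s.val < v ↔ ¬ Inc s := by
    intro s
    constructor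
    · intro hlt
      by_contra hcon
      have hsub : (Finset.univ.filter fun s : Fin n => ¬ Inc s) ⊆ Finset.Iio s := by
        intro x hx
        rw [Finset.mem_filter] at hx
        rw [Finset.mem_Iio]
        by_contra hge
        exact hx.2 (hIncMono s x (not_lt.mp hge) hcon)
      have := Finset.card_le_card hsub
      rw [Fin.card_Iio] at this
      omega
    · intro hnot
      have hsub : Finset.Iic s ⊆ (Finset.univ.filter fun s : Fin n => ¬ Inc s) := by
        intro x hx
        rw [Finset.mem_Iic] at hx
        rw [Finset.mem_filter]
        exact ⟨Finset.mem_univ _, fun hc => hnot (hIncMono x s hx hc)⟩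
      have := Finset.card_le_card hsub
      rw [Fin.card_Iic] at this
      omega
  have hlast : Inc ⟨n - 1, by omega⟩ := by
    intro t ht
    exact absurd (Fin.lt_def.mp ht) (by have := t.isLt; simp only [Fin.val_mk]; omega)
  have hvn : v < n := by
    by_contra hcon
    exact ((hv_iff ⟨n - 1, by omega⟩).1 (by simp only [Fin.val_mk]; omega)) hlast
  refine ⟨v, hvn, perm_eq_of_lt_iff ρ (rhoPerm n v) (fun s t => ?_)⟩
  rcases lt_trichotomy s t with h3 | h3 | h3
  · rw [hInc_iff s t h3, rho_lt_iff h3, ← not_iff_not, ← hv_iff]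
    omega
  · subst h3; simp
  · constructor
    · intro hlt
      by_contra hcon
      rcases lt_trichotomy (rhoPerm n v t) (rhoPerm n v s) with h4 | h4 | h4
      · have hv1 : v ≤ t.val := (rho_lt_iff h3).1 h4
        have hiv : Inc t := by
          by_contra hni
          have := (hv_iff t).2 hni
          omega
        have : ρ t < ρ s := (hInc_iff t s h3).2 hiv
        exact lt_asymm hlt this
      · exact (ne_of_lt h3) ((rhoPerm n v).injective h4)
      · exact hcon h4
    · intro hlt
      by_contra hcon
      rcases lt_trichotomy (ρ t) (ρ s) with h4 | h4 | h4
      · have hv1 : v ≤ t.val := by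
          rw [hInc_iff t s h3] at h4
          by_contra hni
          exact ((hv_iff t).1 (by omega)) h4
        have : rhoPerm n v t < rhoPerm n v s := (rho_lt_iff h3).2 hv1
        exact lt_asymm hlt this
      · exact (ne_of_lt h3) (ρ.injective h4)
      · exact hcon h4

lemma parkAux_isSome_mono {n : ℕ} (f : Fin n → Fin n) {t : ℕ} (d : ℕ)
    (h : (parkAux f (t + d)).isSome) : (parkAux f t).isSome := by
  induction d with
  | zero => exact h
  | succ d IH =>
    apply IH
    rw [show t + (d + 1) = (t + d) + 1 from rfl, parkAux] at h
    cases hE : parkAux f (t + d) with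
    | none => rw [hE] at h; simp at h
    | some o => simp [hE]

lemma parkAux_persist_one {n : ℕ} {f : Fin n → Fin n} {t : ℕ} (ht : t < n)
    {o o' : Fin n → Option (Fin n)} (h1 : parkAux f t = some o) (h2 : parkAux f (t+1) = some o')
    {s : Fin n} {c : Fin n} (h : o s = some c) : o' s = some c := by
  obtain ⟨hS, rfl⟩ := parkAux_succ_some f ht h1 h2
  rw [Function.update_apply, if_neg, h]
  intro he
  have hmem := Finset.min'_mem _ hS
  rw [Finset.mem_filter] at hmem
  rw [← he, h] at hmem
  exact absurd hmem.2.2 (by simp)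

lemma parkAux_persist {n : ℕ} {f : Fin n → Fin n} {t : ℕ} (d : ℕ) (htd : t + d ≤ n)
    {o o' : Fin n → Option (Fin n)} (h1 : parkAux f t = some o) (h2 : parkAux f (t+d) = some o')
    {s : Fin n} {c : Fin n} (h : o s = some c) : o' s = some c := by
  induction d generalizing o' with
  | zero => rw [Nat.add_zero, h1] at h2; rw [← Option.some_inj.mp h2]; exact h
  | succ d IH =>
    rw [show t + (d + 1) = (t + d) + 1 from rfl] at h2 htd
    have hsome : (parkAux f (t + d)).isSome :=
      parkAux_isSome_mono f 1 (by rw [show t + d + 1 = t + d + 1 from rfl, h2]; rfl)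
    obtain ⟨o₁, ho₁⟩ := Option.isSome_iff_exists.mp hsome
    exact parkAux_persist_one (by omega) ho₁ h2 (IH (by omega) ho₁)

lemma parkAux_carlt {n : ℕ} {f : Fin n → Fin n} : ∀ {t : ℕ}, t ≤ n →
    ∀ {o : Fin n → Option (Fin n)}, parkAux f t = some o →
    ∀ {s c : Fin n}, o s = some c → c.val < t := by
  intro t
  induction t with
  | zero =>
    intro _ o ho s c h
    rw [parkAux] at ho
    rw [← Option.some_inj.mp ho] at h
    exact absurd h (by simp)
  | succ t IH =>
    intro ht o ho s c h
    have hsome : (parkAux f t).isSome := parkAux_isSome_mono f 1 (by rw [ho]; rfl)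
    obtain ⟨o₁, ho₁⟩ := Option.isSome_iff_exists.mp hsome
    obtain ⟨hS, rfl⟩ := parkAux_succ_some f (by omega) ho₁ ho
    rw [Function.update_apply] at h
    by_cases hs : s = (Finset.univ.filter fun s => f ⟨t, by omega⟩ ≤ s ∧ o₁ s = none).min' hS
    · rw [if_pos hs] at h
      have : c = ⟨t, by omega⟩ := (Option.some_inj.mp h).symm
      rw [this]
      exact Nat.lt_succ_self t
    · rw [if_neg hs] at h
      exact Nat.lt_succ_of_lt (IH (by omega) ho₁ h)

/-- occupancy at time `t` is determined by the final permutation. -/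
lemma occ_char {n : ℕ} {f : Fin n → Fin n} {ρ : Equiv.Perm (Fin n)}
    (hfin : parkAux f n = some (fun s => some (ρ s)))
    {t : ℕ} (ht : t ≤ n) {o : Fin n → Option (Fin n)} (ho : parkAux f t = some o) :
    o = fun s => if (ρ s).val < t then some (ρ s) else none := by
  funext s
  by_cases hc : (ρ s).val < t
  · rw [if_pos hc]
    have hc1 : (ρ s).val < n := (ρ s).isLt
    have hsome1 : (parkAux f ((ρ s).val + 1)).isSome := by
      apply parkAux_isSome_mono f (n - ((ρ s).val + 1))
      rw [show (ρ s).val + 1 + (n - ((ρ s).val + 1)) = n by omega, hfin]; rfl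
    obtain ⟨o₂, ho₂⟩ := Option.isSome_iff_exists.mp hsome1
    have hsome0 : (parkAux f ((ρ s).val)).isSome := parkAux_isSome_mono f 1 (by rw [ho₂]; rfl)
    obtain ⟨o₁, ho₁⟩ := Option.isSome_iff_exists.mp hsome0
    obtain ⟨hS, rfl⟩ := parkAux_succ_some f (by omega) ho₁ ho₂
    set m := (Finset.univ.filter fun s' => f ⟨(ρ s).val, by omega⟩ ≤ s' ∧ o₁ s' = none).min' hS with hmdef
    have hm : Function.update o₁ m (some ⟨(ρ s).val, by omega⟩) m = some ⟨(ρ s).val, by omega⟩ :=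
      Function.update_self _ _ _
    have hfinm : some (ρ m) = some (⟨(ρ s).val, by omega⟩ : Fin n) :=
      parkAux_persist (o' := fun s => some (ρ s)) (s := m) (n - ((ρ s).val + 1)) (by omega) ho₂
        (by rw [show (ρ s).val + 1 + (n - ((ρ s).val + 1)) = n by omega]; exact hfin) hm
    have hms : m = s := by
      apply ρ.injective
      have : ρ m = ⟨(ρ s).val, by omega⟩ := Option.some_inj.mp hfinm
      rw [this]
    have := parkAux_persist (t - ((ρ s).val + 1)) (by omega) ho₂
      (by rw [show (ρ s).val + 1 + (t - ((ρ s).val + 1)) = t by omega]; exact ho) hm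
    rw [hms] at this
    rw [this]
  · rw [if_neg hc]
    cases hE : o s with
    | none => rfl
    | some c' =>
      exfalso
      have hlt := parkAux_carlt ht ho hE
      have := parkAux_persist (n - t) (by omega) ho
        (by rw [show t + (n - t) = n by omega]; exact hfin) hE
      have : ρ s = c' := Option.some_inj.mp this
      omega

lemma park_constraints {n : ℕ} {f : Fin n → Fin n} {ρ : Equiv.Perm (Fin n)}
    (hfin : parkAux f n = some (fun s => some (ρ s))) (c : Fin n) :
    f c ≤ ρ.symm c ∧ ∀ s : Fin n, f c ≤ s → c.val ≤ (ρ s).val → ρ.symm c ≤ s := by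
  have hc := c.isLt
  have hsome1 : (parkAux f (c.val + 1)).isSome := by
    apply parkAux_isSome_mono f (n - (c.val + 1))
    rw [show c.val + 1 + (n - (c.val + 1)) = n by omega, hfin]; rfl
  obtain ⟨o₂, ho₂⟩ := Option.isSome_iff_exists.mp hsome1
  have hsome0 : (parkAux f c.val).isSome := parkAux_isSome_mono f 1 (by rw [ho₂]; rfl)
  obtain ⟨o₁, ho₁⟩ := Option.isSome_iff_exists.mp hsome0
  obtain ⟨hS, heq⟩ := parkAux_succ_some f (by omega) ho₁ ho₂
  set m := (Finset.univ.filter fun s' => f ⟨c.val, by omega⟩ ≤ s' ∧ o₁ s' = none).min' hS with hmdef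
  have ho₁char := occ_char hfin (by omega : c.val ≤ n) ho₁
  have ho₂char := occ_char hfin (by omega : c.val + 1 ≤ n) ho₂
  have hmmem := Finset.min'_mem _ hS
  rw [Finset.mem_filter] at hmmem
  have hfcm : f c ≤ m := hmmem.2.1
  -- the car parked at m is c
  have hrm : ρ m = c := by
    have h2 : o₂ m = some ⟨c.val, by omega⟩ := by rw [heq]; exact Function.update_self _ _ _
    simp only [ho₂char] at h2
    by_cases hlt : (ρ m).val < c.val + 1
    · rw [if_pos hlt] at h2
      rw [Option.some_inj.mp h2]
    · rw [if_neg hlt] at h2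
      exact absurd h2 (by simp)
  have hsymm : ρ.symm c = m := by rw [← hrm]; exact Equiv.symm_apply_apply ρ m
  constructor
  · rw [hsymm]; exact hfcm
  · intro s hfs hcs
    rw [hsymm]
    apply Finset.min'_le
    rw [Finset.mem_filter]
    refine ⟨Finset.mem_univ _, hfs, ?_⟩
    simp only [ho₁char]
    rw [if_neg (by omega)]

lemma cond_of_park {n v : ℕ} (hv : v < n) {f : Fin n → Fin n}
    (hfin : parkAux f n = some (fun s => some (rhoPerm n v s))) : CondV n v f := by
  intro i
  have hi := i.isLt
  have hcon := park_constraints hfin i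
  have hfi := (f i).isLt
  constructor
  · intro hsmall
    have hsymm : (rhoPerm n v).symm i = ⟨i.val + v, by omega⟩ := by
      rw [Equiv.symm_apply_eq]
      apply Fin.ext
      rw [rhoPerm_val_ge n v _ (by simp only [Fin.val_mk]; omega)]
      simp only [Fin.val_mk]
      omega
    have hub : (f i).val ≤ i.val + v := by
      have := hcon.1
      rw [hsymm, Fin.le_def] at this
      simpa using this
    have hlb : v ≤ (f i).val := by
      by_contra hlt
      have := hcon.2 (f i) le_rfl (by rw [rhoPerm_val_lt n v _ (by omega)]; omega)
      rw [hsymm, Fin.le_def] at this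
      simp only [Fin.val_mk] at this
      omega
    exact ⟨hlb, by omega⟩
  · intro hbig
    have hv1 : 1 ≤ v := by omega
    have hsymm : (rhoPerm n v).symm i = ⟨n - 1 - i.val, by omega⟩ := by
      rw [Equiv.symm_apply_eq]
      apply Fin.ext
      rw [rhoPerm_val_lt n v _ (by simp only [Fin.val_mk]; omega)]
      simp only [Fin.val_mk]
      omega
    have hub : (f i).val ≤ n - 1 - i.val := by
      have := hcon.1
      rw [hsymm, Fin.le_def] at this
      simpa using this
    by_contra hne
    have hlt : (f i).val < n - 1 - i.val := by omega
    have := hcon.2 (f i) le_rfl (by rw [rhoPerm_val_lt n v _ (by omega)]; omega)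
    rw [hsymm, Fin.le_def] at this
    simp only [Fin.val_mk] at this
    omega

lemma P_iff {n : ℕ} (hn : 0 < n) (f : Fin n → Fin n) :
    (IsParkingFunction f ∧ ∃ ρ : Equiv.Perm (Fin n), IsParkingPerm f ρ ∧
      AvoidsAll ρ [p132, p213, p231]) ↔ ∃ v, v < n ∧ CondV n v f := by
  constructor
  · rintro ⟨hpf, ρ, hperm, havoid⟩
    obtain ⟨v, hvn, rfl⟩ := rho_of_avoids hn ρ havoid
    exact ⟨v, hvn, cond_of_park hvn hperm⟩
  · rintro ⟨v, hvn, hcond⟩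
    exact ⟨isParkingFunction_of_cond hvn hcond, rhoPerm n v,
      isParkingPerm_of_cond hvn hcond, avoids_rho⟩

lemma card_slice {n v : ℕ} (hv : v < n) [DecidablePred (CondV n v)] :
    (Finset.univ.filter (CondV n v)).card = (n - v).factorial := by
  classical
  have hset : Finset.univ.filter (CondV n v) = Fintype.piFinset (fun i : Fin n =>
      if h : i.val < n - v then Finset.Icc ⟨v, by omega⟩ ⟨v + i.val, by have := i.isLt; omega⟩
      else ({⟨n - 1 - i.val, by omega⟩} : Finset (Fin n))) := by
    ext f
    simp only [Finset.mem_filter, Finset.mem_univ, true_and, Fintype.mem_piFinset]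
    constructor
    · intro hf i
      have hi := i.isLt
      by_cases h : i.val < n - v
      · rw [dif_pos h, Finset.mem_Icc, Fin.le_def, Fin.le_def]
        have := (hf i).1 h
        simp only [Fin.val_mk]
        omega
      · rw [dif_neg h, Finset.mem_singleton]
        exact Fin.ext ((hf i).2 (by omega))
    · intro hf i
      have hi := i.isLt
      constructor
      · intro h
        have := hf i
        rw [dif_pos h, Finset.mem_Icc, Fin.le_def, Fin.le_def] at this
        simp only [Fin.val_mk] at this
        omega
      · intro h
        have := hf i
        rw [dif_neg (by omega), Finset.mem_singleton] at this
        rw [this]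
  rw [hset, Fintype.card_piFinset]
  have hcard : ∀ i : Fin n, (if h : i.val < n - v then
        Finset.Icc (⟨v, by omega⟩ : Fin n) ⟨v + i.val, by have := i.isLt; omega⟩
      else ({⟨n - 1 - i.val, by omega⟩} : Finset (Fin n))).card
      = if i.val < n - v then i.val + 1 else 1 := by
    intro i
    by_cases h : i.val < n - v
    · rw [dif_pos h, if_pos h, Fin.card_Icc]
      simp only [Fin.val_mk]
      omega
    · rw [dif_neg h, if_neg h, Finset.card_singleton]
  rw [Finset.prod_congr rfl (fun i _ => hcard i)]
  rw [Fin.prod_univ_eq_prod_range (fun j => if j < n - v then j + 1 else 1) n]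
  rw [Finset.range_eq_Ico, ← Finset.prod_Ico_consecutive _ (Nat.zero_le (n - v)) (by omega : n - v ≤ n)]
  have h1 : (∏ i ∈ Finset.Ico 0 (n - v), if i < n - v then i + 1 else 1)
      = ∏ i ∈ Finset.Ico 0 (n - v), (i + 1) :=
    Finset.prod_congr rfl (fun i hi => by
      rw [Finset.mem_Ico] at hi; rw [if_pos hi.2])
  have h2 : (∏ i ∈ Finset.Ico (n - v) n, if i < n - v then i + 1 else 1) = 1 :=
    Finset.prod_eq_one (fun i hi => by
      rw [Finset.mem_Ico] at hi; rw [if_neg (by omega)])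
  rw [h1, h2, mul_one, ← Finset.range_eq_Ico]
  exact Finset.prod_range_add_one_eq_factorial (n - v)

end ParkingDev

theorem stmt10 (n : ℕ) (hn : 1 ≤ n) :
    pk n [p132, p213, p231] = ∑ k ∈ Finset.Icc 1 n, k.factorial := by
  classical
  rw [pk, Nat.card_eq_fintype_card, Fintype.card_subtype]
  have hset : (Finset.univ.filter fun f : Fin n → Fin n => IsParkingFunction f ∧
        ∃ ρ : Equiv.Perm (Fin n), IsParkingPerm f ρ ∧ AvoidsAll ρ [p132, p213, p231])
      = (Finset.range n).biUnion (fun v => Finset.univ.filter (ParkingDev.CondV n v)) := by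
    ext f
    simp only [Finset.mem_filter, Finset.mem_univ, true_and, Finset.mem_biUnion,
      Finset.mem_range]
    rw [ParkingDev.P_iff (by omega) f]
  rw [hset, Finset.card_biUnion]
  · rw [Finset.sum_congr rfl (fun v hv => ParkingDev.card_slice (Finset.mem_range.mp hv))]
    have h1 : ∑ v ∈ Finset.range n, (n - v).factorial
        = ∑ v ∈ Finset.range n, (v + 1).factorial := by
      rw [← Finset.sum_range_reflect (fun j => (j + 1).factorial) n]
      exact Finset.sum_congr rfl (fun i hi => by
        rw [Finset.mem_range] at hi; congr 1; omega)
    rw [h1, show Finset.Icc 1 n = Finset.Ico 1 (n + 1) from (Finset.Ico_add_one_right_eq_Icc 1 n).symm,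
      Finset.sum_Ico_eq_sum_range]
    exact Finset.sum_congr (by norm_num) (fun i _ => by congr 1; omega)
  · intro x hx y hy hxy
    rw [Function.onFun, Finset.disjoint_left]
    intro f hfx hfy
    simp only [Finset.mem_filter, Finset.mem_univ, true_and] at hfx hfy
    apply hxy
    have hx' := Finset.mem_range.mp hx
    have hy' := Finset.mem_range.mp hy
    have e1 := (hfx ⟨0, by omega⟩).1 (by simp only [Fin.val_mk]; omega)
    have e2 := (hfy ⟨0, by omega⟩).1 (by simp only [Fin.val_mk]; omega)
    simp only [Fin.val_mk] at e1 e2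
    omega
end
end

section
/- The number of parking functions of size n whose parking permutation avoids 132, 231, and 321 equals ∑_{k=1}^n n!/k. -/
open Finset

noncomputable section

namespace PkAux

variable {n : ℕ}

def rhoFun (m : Fin n) : Fin n → Fin n := fun s =>
  if s.val = 0 then m else if s.val ≤ m.val then ⟨s.val - 1, by omega⟩ else s

lemma rhoFun_injective (m : Fin n) : Function.Injective (rhoFun m) := by
  intro a b hab
  simp only [rhoFun] at hab
  have hm := m.isLt
  split_ifs at hab <;>
    (simp only [Fin.ext_iff, Fin.val_mk] at hab ⊢; omega)

noncomputable def rho (m : Fin n) : Equiv.Perm (Fin n) :=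
  Equiv.ofBijective _ (Finite.injective_iff_bijective.mp (rhoFun_injective m))

lemma rho_val (m s : Fin n) :
    (rho m s).val = if s.val = 0 then m.val else if s.val ≤ m.val then s.val - 1 else s.val := by
  show (rhoFun m s).val = _
  simp only [rhoFun]
  split_ifs <;> rfl

lemma rho_tailmono (m : Fin n) {j k : Fin n} (hj : 0 < j.val) (hjk : j.val < k.val) :
    rho m j < rho m k := by
  have h1 := rho_val m j
  have h2 := rho_val m k
  rw [Fin.lt_def]
  split_ifs at h1 h2 <;> omega

def Estate (m : Fin n) (k : ℕ) : Fin n → Option (Fin n) := fun s =>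
  if (k ≤ m.val ∧ 1 ≤ s.val ∧ s.val ≤ k) ∨ (m.val < k ∧ s.val < k) then some (rho m s) else none

def target (m : Fin n) (k : ℕ) (h : k < n) : Fin n :=
  if hk : k < m.val then ⟨k + 1, by have := m.isLt; omega⟩
  else if k = m.val then ⟨0, by omega⟩ else ⟨k, h⟩

lemma target_spec (m : Fin n) (k : ℕ) (h : k < n) :
    (k < m.val ∧ (target m k h).val = k + 1) ∨ (k = m.val ∧ (target m k h).val = 0) ∨
      (m.val < k ∧ (target m k h).val = k) := by
  unfold target; split_ifs <;> simp <;> omega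

lemma rho_target (m : Fin n) (k : ℕ) (h : k < n) : rho m (target m k h) = ⟨k, h⟩ := by
  have hm := m.isLt
  apply Fin.ext
  show (rho m (target m k h)).val = k
  have hts := target_spec m k h
  rw [rho_val]
  split_ifs <;> omega

lemma Estate_eq_none_iff (m : Fin n) (k : ℕ) (s : Fin n) :
    Estate m k s = none ↔
      ¬((k ≤ m.val ∧ 1 ≤ s.val ∧ s.val ≤ k) ∨ (m.val < k ∧ s.val < k)) := by
  simp only [Estate]; split_ifs with h <;> simp [h]

lemma Estate_target (m : Fin n) (k : ℕ) (h : k < n) : Estate m k (target m k h) = none := by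
  rw [Estate_eq_none_iff]
  have hts := target_spec m k h; omega

lemma target_le (m : Fin n) (k : ℕ) (h : k < n) (s : Fin n)
    (hnone : Estate m k s = none) (hpos : k < m.val → 1 ≤ s.val) :
    target m k h ≤ s := by
  rw [Estate_eq_none_iff] at hnone
  rw [Fin.le_def]
  have hts := target_spec m k h; omega

lemma update_Estate (m : Fin n) (k : ℕ) (h : k < n) :
    Function.update (Estate m k) (target m k h) (some ⟨k, h⟩) = Estate m (k + 1) := by
  have hm := m.isLt
  funext s
  rcases eq_or_ne s (target m k h) with rfl | hs
  · rw [Function.update_self]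
    have cond : ((k + 1 ≤ m.val ∧ 1 ≤ (target m k h).val ∧ (target m k h).val ≤ k + 1) ∨
        (m.val < k + 1 ∧ (target m k h).val < k + 1)) := by
          have hts := target_spec m k h; omega
    rw [Estate, if_pos cond, rho_target]
  · rw [Function.update_of_ne hs]
    have hsv : s.val ≠ (target m k h).val := fun hc => hs (Fin.ext hc)
    simp only [Estate]
    have hts := target_spec m k h
    split_ifs <;> first | rfl | omega

def Good (m : Fin n) (f : Fin n → Fin n) : Prop :=
  (f m).val = 0 ∧ ∀ c : Fin n,
    (c.val < m.val → 1 ≤ (f c).val ∧ (f c).val ≤ c.val + 1) ∧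
    (m.val < c.val → (f c).val ≤ c.val)

lemma parkAux_succ (f : Fin n → Fin n) (k : ℕ) :
    parkAux f (k + 1) = (parkAux f k).bind fun occ =>
      if h : k < n then
        if hS : (Finset.univ.filter fun s => f ⟨k, h⟩ ≤ s ∧ occ s = none).Nonempty then
          some (Function.update occ
            ((Finset.univ.filter fun s => f ⟨k, h⟩ ≤ s ∧ occ s = none).min' hS)
            (some ⟨k, h⟩))
        else none
      else some occ := rfl

lemma Estate_zero (m : Fin n) : Estate m 0 = fun _ => none := by
  funext s; rw [Estate_eq_none_iff]; omega

lemma sim_forward (m : Fin n) (f : Fin n → Fin n) (hf : Good m f) :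
    ∀ k, k ≤ n → parkAux f k = some (Estate m k) := by
  intro k
  induction k with
  | zero => intro _; rw [Estate_zero]; rfl
  | succ k ih =>
    intro hk1
    have hk : k < n := hk1
    have hfc := hf.2 ⟨k, hk⟩
    have hkv : ((⟨k, hk⟩ : Fin n)).val = k := rfl
    have hts := target_spec m k hk
    have hflt : f ⟨k, hk⟩ ≤ target m k hk := by
      rw [Fin.le_def]
      rcases hts with ⟨h1, h2⟩ | ⟨h1, h2⟩ | ⟨h1, h2⟩
      · have := (hfc.1 (by omega)).2; omega
      · have hcm : (⟨k, hk⟩ : Fin n) = m := Fin.ext h1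
        rw [hcm, hf.1]; omega
      · have := hfc.2 (by omega); omega
    have htmem : target m k hk ∈
        (Finset.univ.filter fun s => f ⟨k, hk⟩ ≤ s ∧ Estate m k s = none) := by
      simp only [Finset.mem_filter, Finset.mem_univ, true_and]
      exact ⟨hflt, Estate_target m k hk⟩
    have hS : (Finset.univ.filter fun s => f ⟨k, hk⟩ ≤ s ∧ Estate m k s = none).Nonempty :=
      ⟨_, htmem⟩
    have hmin : (Finset.univ.filter fun s => f ⟨k, hk⟩ ≤ s ∧ Estate m k s = none).min' hS
        = target m k hk := by
      refine le_antisymm (Finset.min'_le _ _ htmem) (Finset.le_min' _ _ _ ?_)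
      intro y hy
      simp only [Finset.mem_filter, Finset.mem_univ, true_and] at hy
      refine target_le m k hk y hy.2 ?_
      intro hkm
      have h1 := (hfc.1 (by omega)).1
      have h2 := hy.1
      rw [Fin.le_def] at h2
      omega
    rw [parkAux_succ, ih (le_of_lt hk)]
    simp only [Option.bind_some]
    rw [dif_pos hk, dif_pos hS, hmin, update_Estate]

lemma parkAux_isSome_le (f : Fin n → Fin n) {k l : ℕ} (hkl : k ≤ l)
    (h : (parkAux f l).isSome) : (parkAux f k).isSome := by
  induction l with
  | zero => exact (Nat.le_zero.mp hkl) ▸ h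
  | succ l ih =>
    rcases Nat.lt_or_ge k (l + 1) with h' | h'
    · apply ih (by omega)
      rw [parkAux_succ] at h
      cases ho : parkAux f l with
      | none => rw [ho] at h; simp at h
      | some occ => rfl
    · have : k = l + 1 := by omega
      exact this ▸ h

lemma parkAux_step_persist {f : Fin n → Fin n} {k : ℕ} {occ occ' : Fin n → Option (Fin n)}
    (hk : parkAux f k = some occ) (hk1 : parkAux f (k + 1) = some occ')
    {s c : Fin n} (hs : occ s = some c) : occ' s = some c := by
  rw [parkAux_succ, hk] at hk1
  simp only [Option.bind_some] at hk1
  by_cases h : k < n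
  · rw [dif_pos h] at hk1
    by_cases hS : (Finset.univ.filter fun s => f ⟨k, h⟩ ≤ s ∧ occ s = none).Nonempty
    · rw [dif_pos hS] at hk1
      have he := Option.some.inj hk1
      have hmem := Finset.min'_mem _ hS
      simp only [Finset.mem_filter, Finset.mem_univ, true_and] at hmem
      have hne : s ≠ (Finset.univ.filter fun s => f ⟨k, h⟩ ≤ s ∧ occ s = none).min' hS := by
        intro hemp
        rw [← hemp] at hmem
        rw [hmem.2] at hs
        cases hs
      rw [← he, Function.update_of_ne hne]
      exact hs
    · rw [dif_neg hS] at hk1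
      cases hk1
  · rw [dif_neg h] at hk1
    rw [← Option.some.inj hk1]
    exact hs

lemma parkAux_persist {f : Fin n → Fin n} {k l : ℕ} (hkl : k ≤ l)
    {occ occ' : Fin n → Option (Fin n)}
    (hk : parkAux f k = some occ) (hl : parkAux f l = some occ')
    {s c : Fin n} (hs : occ s = some c) : occ' s = some c := by
  induction l generalizing occ' with
  | zero =>
    have : k = 0 := by omega
    subst this
    rw [hk] at hl
    rw [← Option.some.inj hl]
    exact hs
  | succ l ih =>
    rcases Nat.lt_or_ge k (l + 1) with h' | h'
    · have hsl : (parkAux f l).isSome := by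
        apply parkAux_isSome_le f (Nat.le_succ l)
        rw [hl]; rfl
      obtain ⟨occ'', h''⟩ := Option.isSome_iff_exists.mp hsl
      exact parkAux_step_persist h'' hl (ih (by omega) h'')
    · have : k = l + 1 := by omega
      subst this
      rw [hk] at hl
      rw [← Option.some.inj hl]
      exact hs

lemma sim_backward (m : Fin n) (f : Fin n → Fin n)
    (hp : parkAux f n = some fun s => some (rho m s)) :
    ∀ k, k ≤ n → parkAux f k = some (Estate m k) ∧
      ∀ c : Fin n, c.val < k →
        ((c.val < m.val → 1 ≤ (f c).val ∧ (f c).val ≤ c.val + 1) ∧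
         (m.val < c.val → (f c).val ≤ c.val) ∧ (c = m → (f c).val = 0)) := by
  intro k
  induction k with
  | zero =>
    intro _
    refine ⟨by rw [Estate_zero]; rfl, fun c hc => absurd hc (by omega)⟩
  | succ k ih =>
    intro hk1
    have hk : k < n := hk1
    obtain ⟨hpark, hcons⟩ := ih (le_of_lt hk)
    have hsome : (parkAux f (k + 1)).isSome := by
      apply parkAux_isSome_le f hk1
      rw [hp]; rfl
    obtain ⟨occ', hocc'⟩ := Option.isSome_iff_exists.mp hsome
    have hstep := hocc'
    rw [parkAux_succ, hpark] at hstep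
    simp only [Option.bind_some] at hstep
    rw [dif_pos hk] at hstep
    by_cases hS : (Finset.univ.filter fun s => f ⟨k, hk⟩ ≤ s ∧ Estate m k s = none).Nonempty
    · rw [dif_pos hS] at hstep
      set t0 := (Finset.univ.filter fun s => f ⟨k, hk⟩ ≤ s ∧ Estate m k s = none).min' hS
        with ht0
      have hocc'' : occ' = Function.update (Estate m k) t0 (some ⟨k, hk⟩) :=
        (Option.some.inj hstep).symm
      have hmem := Finset.min'_mem _ hS
      rw [← ht0] at hmem
      simp only [Finset.mem_filter, Finset.mem_univ, true_and] at hmem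
      have hfin : (fun s => some (rho m s)) t0 = some (⟨k, hk⟩ : Fin n) := by
        apply parkAux_persist hk1 hocc' hp
        rw [hocc'', Function.update_self]
      have hrho : rho m t0 = ⟨k, hk⟩ := Option.some.inj hfin
      have ht : t0 = target m k hk := (rho m).injective (by rw [hrho, rho_target])
      have hts := target_spec m k hk
      constructor
      · have : occ' = Estate m (k + 1) := by rw [hocc'', ht, update_Estate]
        rw [← this]; exact hocc'
      · intro c hc
        rcases Nat.lt_or_ge c.val k with h' | h'
        · exact hcons c h'
        · have hck : c = ⟨k, hk⟩ := Fin.ext (show c.val = k by omega)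
          subst hck
          have hkv : ((⟨k, hk⟩ : Fin n)).val = k := rfl
          have hft : (f ⟨k, hk⟩).val ≤ (target m k hk).val := by
            have := hmem.1
            rw [Fin.le_def, ht] at this
            exact this
          refine ⟨fun hlt => ⟨?_, by omega⟩, fun hgt => by omega, fun hcm => ?_⟩
          · by_contra h0
            push_neg at h0
            have hn0 : 0 < n := by omega
            have h0v : ((⟨0, hn0⟩ : Fin n)).val = 0 := rfl
            have hz : (⟨0, hn0⟩ : Fin n) ∈
                (Finset.univ.filter fun s => f ⟨k, hk⟩ ≤ s ∧ Estate m k s = none) := by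
              simp only [Finset.mem_filter, Finset.mem_univ, true_and]
              constructor
              · rw [Fin.le_def]; omega
              · rw [Estate_eq_none_iff]; omega
            have hle := Finset.min'_le _ _ hz
            rw [← ht0, ht, Fin.le_def] at hle
            omega
          · have hkm : k = m.val := congrArg Fin.val hcm
            omega
    · rw [dif_neg hS] at hstep
      cases hstep

lemma Estate_n (m : Fin n) : Estate m n = fun s => some (rho m s) := by
  funext s
  rw [Estate, if_pos (Or.inr ⟨m.isLt, s.isLt⟩)]

lemma good_parkingPerm (m : Fin n) (f : Fin n → Fin n) (hf : Good m f) :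
    IsParkingPerm f (rho m) := by
  rw [IsParkingPerm, sim_forward m f hf n le_rfl, Estate_n]

lemma good_isPF (m : Fin n) (f : Fin n → Fin n) (hf : Good m f) : IsParkingFunction f := by
  intro i
  have hcard : (Finset.Iic i).card = i.val + 1 := Fin.card_Iic i
  rw [← hcard]
  apply Finset.card_le_card_of_injOn (fun s => rho m s)
  · intro s hs
    simp only [Finset.mem_coe, Finset.mem_Iic] at hs
    simp only [Finset.mem_coe, Finset.mem_filter, Finset.mem_univ, true_and]
    rw [Fin.le_def] at hs ⊢
    have hrv := rho_val m s
    have key : (f (rho m s)).val ≤ s.val := by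
      split_ifs at hrv with e0 e1
      · have hsm : rho m s = m := Fin.ext hrv
        rw [hsm, hf.1]
        omega
      · have := (hf.2 (rho m s)).1 (by omega)
        omega
      · have := (hf.2 (rho m s)).2 (by omega)
        omega
    omega
  · intro a _ b _ hab
    exact (rho m).injective hab

lemma vec3_strictMono {x y z : Fin n} (h1 : x < y) (h2 : y < z) :
    StrictMono (![x, y, z] : Fin 3 → Fin n) := by
  intro a b hab
  fin_cases a <;> fin_cases b <;>
    simp_all [Matrix.cons_val_zero, Matrix.cons_val_one, Matrix.head_cons] <;>
    first
      | exact h1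
      | exact h2
      | exact h1.trans h2
      | omega

lemma avoids_of_tailmono (ρ : Equiv.Perm (Fin n))
    (hmono : ∀ j k : Fin n, 0 < j.val → j.val < k.val → ρ j < ρ k) :
    AvoidsAll ρ [p132, p231, p321] := by
  intro σ hσ
  rintro ⟨g, hg, hiff⟩
  have hσ21 : σ 2 < σ 1 := by
    simp only [List.mem_cons, List.not_mem_nil, or_false] at hσ
    rcases hσ with rfl | rfl | rfl <;> decide
  have h1 : ρ (g 2) < ρ (g 1) := (hiff 2 1).mp hσ21
  have h2 : ρ (g 1) < ρ (g 2) := by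
    have e01 := hg (show (0 : Fin 3) < 1 by decide)
    have e12 := hg (show (1 : Fin 3) < 2 by decide)
    rw [Fin.lt_def] at e01 e12
    exact hmono _ _ (by omega) e12
  exact absurd h1 (not_lt.mpr h2.le)

lemma iff_vec (σ : Equiv.Perm (Fin 3)) (ρ : Equiv.Perm (Fin n)) (x y z : Fin n)
    (h01 : σ 0 < σ 1 ↔ ρ x < ρ y) (h02 : σ 0 < σ 2 ↔ ρ x < ρ z) (h12 : σ 1 < σ 2 ↔ ρ y < ρ z)
    (h10 : σ 1 < σ 0 ↔ ρ y < ρ x) (h20 : σ 2 < σ 0 ↔ ρ z < ρ x) (h21 : σ 2 < σ 1 ↔ ρ z < ρ y) :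
    ∀ a b : Fin 3, σ a < σ b ↔ ρ (![x, y, z] a) < ρ (![x, y, z] b) := by
  intro a b
  fin_cases a <;> fin_cases b <;>
    simp only [Matrix.cons_val_zero, Matrix.cons_val_one, Matrix.head_cons, Fin.isValue,
      Matrix.cons_val_two, Matrix.tail_cons, lt_self_iff_false] <;>
    first
      | exact h01 | exact h02 | exact h12 | exact h10 | exact h20 | exact h21

lemma tailmono_of_avoids (ρ : Equiv.Perm (Fin n))
    (h : AvoidsAll ρ [p132, p231, p321]) :
    ∀ j k : Fin n, 0 < j.val → j.val < k.val → ρ j < ρ k := by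
  intro j k hj hjk
  by_contra hc
  push_neg at hc
  have hne : ρ k ≠ ρ j := fun he => by
    have h' := congrArg Fin.val (ρ.injective he)
    omega
  have hlt : ρ k < ρ j := lt_of_le_of_ne hc hne
  have hn0 : 0 < n := by omega
  set z : Fin n := ⟨0, hn0⟩ with hzdef
  have hzv : z.val = 0 := rfl
  have hzj : z < j := by rw [Fin.lt_def]; omega
  have hjklt : j < k := by rw [Fin.lt_def]; exact hjk
  have hmono := vec3_strictMono hzj hjklt
  have hnzk : (ρ z).val ≠ (ρ k).val := fun hv => by
    have h' := congrArg Fin.val (ρ.injective (Fin.ext hv))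
    omega
  have hnzj : (ρ z).val ≠ (ρ j).val := fun hv => by
    have h' := congrArg Fin.val (ρ.injective (Fin.ext hv))
    omega
  rw [Fin.lt_def] at hlt
  rcases Nat.lt_trichotomy (ρ z).val (ρ k).val with h1 | h1 | h1
  · -- ρ z < ρ k < ρ j : pattern 132
    apply h p132 (by simp)
    refine ⟨![z, j, k], hmono, iff_vec _ _ _ _ _ ?_ ?_ ?_ ?_ ?_ ?_⟩ <;>
      first
        | exact iff_of_true (by decide) (by rw [Fin.lt_def]; omega)
        | exact iff_of_false (by decide) (by rw [Fin.lt_def]; omega)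
  · exact absurd h1 hnzk
  · rcases Nat.lt_trichotomy (ρ z).val (ρ j).val with h2 | h2 | h2
    · -- ρ k < ρ z < ρ j : pattern 231
      apply h p231 (by simp)
      refine ⟨![z, j, k], hmono, iff_vec _ _ _ _ _ ?_ ?_ ?_ ?_ ?_ ?_⟩ <;>
        first
          | exact iff_of_true (by decide) (by rw [Fin.lt_def]; omega)
          | exact iff_of_false (by decide) (by rw [Fin.lt_def]; omega)
    · exact absurd h2 hnzj
    · -- ρ k < ρ j < ρ z : pattern 321
      apply h p321 (by simp)
      refine ⟨![z, j, k], hmono, iff_vec _ _ _ _ _ ?_ ?_ ?_ ?_ ?_ ?_⟩ <;>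
        first
          | exact iff_of_true (by decide) (by rw [Fin.lt_def]; omega)
          | exact iff_of_false (by decide) (by rw [Fin.lt_def]; omega)

lemma rho_ne_m (m x : Fin n) (hx : x.val ≠ 0) : (rho m x).val ≠ m.val := by
  have hrv := rho_val m x
  have h1 := m.isLt
  have h2 := x.isLt
  split_ifs at hrv <;> omega

lemma eq_rho_of_tailmono (hn : 0 < n) (ρ : Equiv.Perm (Fin n))
    (hmono : ∀ j k : Fin n, 0 < j.val → j.val < k.val → ρ j < ρ k) :
    ρ = rho (ρ ⟨0, hn⟩) := by
  set m := ρ ⟨0, hn⟩ with hm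
  have hcard : (Finset.univ.erase m).card = n - 1 := by
    rw [Finset.card_erase_of_mem (Finset.mem_univ m), Finset.card_univ, Fintype.card_fin]
  set f1 : Fin (n - 1) → Fin n := fun i => ρ ⟨i.val + 1, by omega⟩ with hf1
  set f2 : Fin (n - 1) → Fin n := fun i => rho m ⟨i.val + 1, by omega⟩ with hf2
  have hf1mono : StrictMono f1 := by
    intro a b hab
    rw [Fin.lt_def] at hab
    exact hmono _ _ (Nat.succ_pos _) (Nat.succ_lt_succ hab)
  have hf2mono : StrictMono f2 := by
    intro a b hab
    rw [Fin.lt_def] at hab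
    exact rho_tailmono m (Nat.succ_pos _) (Nat.succ_lt_succ hab)
  have hmem1 : ∀ i, f1 i ∈ Finset.univ.erase m := by
    intro i
    rw [Finset.mem_erase]
    refine ⟨fun he => ?_, Finset.mem_univ _⟩
    have h' := congrArg Fin.val (ρ.injective (hm ▸ he))
    simp at h'
  have hmem2 : ∀ i, f2 i ∈ Finset.univ.erase m := by
    intro i
    rw [Finset.mem_erase]
    refine ⟨fun he => ?_, Finset.mem_univ _⟩
    simp only [hf2] at he
    exact rho_ne_m m _ (Nat.succ_ne_zero _) (congrArg Fin.val he)
  have hfeq : f1 = f2 :=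
    (Finset.orderEmbOfFin_unique hcard hmem1 hf1mono).trans
      (Finset.orderEmbOfFin_unique hcard hmem2 hf2mono).symm
  apply Equiv.ext
  intro x
  rcases Nat.eq_zero_or_pos x.val with h0 | h0
  · have hx : x = ⟨0, hn⟩ := Fin.ext h0
    rw [hx, ← hm]
    apply Fin.ext
    rw [rho_val]
    simp
  · have hx : x = ⟨(x.val - 1) + 1, by omega⟩ := Fin.ext (by simp; omega)
    have := congrFun hfeq ⟨x.val - 1, by have := x.isLt; omega⟩
    simp only [hf1, hf2] at this
    rw [hx]
    exact this

lemma good_unique {m m' : Fin n} {f : Fin n → Fin n} (h : Good m f) (h' : Good m' f) :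
    m = m' := by
  by_contra hne
  have hv : m.val ≠ m'.val := fun he => hne (Fin.ext he)
  rcases Nat.lt_or_ge m.val m'.val with hlt | hge
  · have h1 := (h'.2 m).1 hlt
    have h2 := h.1
    omega
  · have h1 := (h.2 m').1 (by omega)
    have h2 := h'.1
    omega

lemma mem_iff (hn : 0 < n) (f : Fin n → Fin n) :
    (IsParkingFunction f ∧ ∃ ρ : Equiv.Perm (Fin n), IsParkingPerm f ρ ∧
      AvoidsAll ρ [p132, p231, p321]) ↔ ∃ m, Good m f := by
  constructor
  · rintro ⟨hpf, ρ, hperm, hav⟩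
    have hmono := tailmono_of_avoids ρ hav
    have hρ := eq_rho_of_tailmono hn ρ hmono
    refine ⟨ρ ⟨0, hn⟩, ?_⟩
    rw [IsParkingPerm, hρ] at hperm
    obtain ⟨_, hcons⟩ := sim_backward (ρ ⟨0, hn⟩) f hperm n le_rfl
    exact ⟨(hcons _ (Fin.isLt _)).2.2 rfl,
      fun c => ⟨(hcons c c.isLt).1, (hcons c c.isLt).2.1⟩⟩
  · rintro ⟨m, hg⟩
    exact ⟨good_isPF m f hg, rho m, good_parkingPerm m f hg,
      avoids_of_tailmono _ (fun j k hj hjk => rho_tailmono m hj hjk)⟩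

def BSet (m c : Fin n) : Finset (Fin n) :=
  Finset.univ.filter fun x =>
    if c.val < m.val then 1 ≤ x.val ∧ x.val ≤ c.val + 1
    else if c = m then x.val = 0 else x.val ≤ c.val

lemma mem_piFinset_iff (m : Fin n) (f : Fin n → Fin n) :
    f ∈ Fintype.piFinset (BSet m) ↔ Good m f := by
  rw [Fintype.mem_piFinset]
  simp only [BSet, Finset.mem_filter, Finset.mem_univ, true_and]
  constructor
  · intro hB
    refine ⟨?_, fun c => ⟨fun hlt => ?_, fun hgt => ?_⟩⟩
    · have := hB m
      rw [if_neg (lt_irrefl _), if_pos rfl] at this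
      exact this
    · have := hB c
      rw [if_pos hlt] at this
      exact this
    · have := hB c
      rw [if_neg (by omega), if_neg (fun he => by rw [he] at hgt; omega)] at this
      exact this
  · intro hg c
    split_ifs with h1 h2
    · exact (hg.2 c).1 h1
    · rw [h2]; exact hg.1
    · refine (hg.2 c).2 ?_
      have : c.val ≠ m.val := fun he => h2 (Fin.ext he)
      omega

lemma card_BSet (m c : Fin n) : (BSet m c).card = if c = m then 1 else c.val + 1 := by
  rcases eq_or_ne c m with rfl | hne
  · rw [if_pos rfl]
    have hn0 : 0 < n := by have := c.isLt; omega
    have hset : BSet c c = {(⟨0, hn0⟩ : Fin n)} := by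
      ext x
      simp only [BSet, Finset.mem_filter, Finset.mem_univ, true_and, Finset.mem_singleton,
        if_neg (lt_irrefl _), if_pos rfl, if_true, Fin.ext_iff]
    rw [hset, Finset.card_singleton]
  · rw [if_neg hne]
    by_cases h1 : c.val < m.val
    · have hcn : c.val + 1 < n := by have := m.isLt; omega
      have hn0 : 0 < n := by omega
      have e0 : ((⟨0, hn0⟩ : Fin n)).val = 0 := rfl
      have e1 : ((⟨c.val + 1, hcn⟩ : Fin n)).val = c.val + 1 := rfl
      have hmem : (⟨0, hn0⟩ : Fin n) ∈ Finset.Iic (⟨c.val + 1, hcn⟩ : Fin n) := by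
        rw [Finset.mem_Iic, Fin.le_def]
        omega
      have hset : BSet m c = (Finset.Iic (⟨c.val + 1, hcn⟩ : Fin n)).erase ⟨0, hn0⟩ := by
        ext x
        simp only [BSet, Finset.mem_filter, Finset.mem_univ, true_and, if_pos h1,
          Finset.mem_erase, Finset.mem_Iic, Fin.le_def, Fin.ext_iff]
        constructor
        · intro hx; exact ⟨by omega, by omega⟩
        · intro hx; exact ⟨by omega, by omega⟩
      rw [hset, Finset.card_erase_of_mem hmem, Fin.card_Iic]
      omega
    · have h2 : m.val < c.val := by
        have : c.val ≠ m.val := fun he => hne (Fin.ext he)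
        omega
      have hset : BSet m c = Finset.Iic c := by
        ext x
        simp only [BSet, Finset.mem_filter, Finset.mem_univ, true_and, if_neg h1, if_neg hne,
          Finset.mem_Iic, Fin.le_def]
      rw [hset, Fin.card_Iic]

lemma prod_BSet (m : Fin n) : (∏ c : Fin n, (BSet m c).card) * (m.val + 1) = n.factorial := by
  have h1 : ∏ c : Fin n, (BSet m c).card = ∏ c ∈ Finset.univ.erase m, (c.val + 1) := by
    rw [← Finset.mul_prod_erase Finset.univ _ (Finset.mem_univ m), card_BSet, if_pos rfl,
      one_mul]
    exact Finset.prod_congr rfl fun c hc => by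
      rw [card_BSet, if_neg (Finset.ne_of_mem_erase hc)]
  have h2 : (m.val + 1) * ∏ c ∈ Finset.univ.erase m, (c.val + 1) = n.factorial := by
    rw [Finset.mul_prod_erase Finset.univ (fun c : Fin n => c.val + 1) (Finset.mem_univ m)]
    rw [Fin.prod_univ_eq_prod_range (fun i => i + 1) n]
    exact Finset.prod_range_add_one_eq_factorial n
  rw [h1, mul_comm]
  exact h2

lemma pk_eq (hn : 0 < n) :
    pk n [p132, p231, p321] = ∑ m : Fin n, ∏ c : Fin n, (BSet m c).card := by
  classical
  rw [pk]
  have he : ∀ f : Fin n → Fin n,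
      (IsParkingFunction f ∧ ∃ ρ : Equiv.Perm (Fin n), IsParkingPerm f ρ ∧
        AvoidsAll ρ [p132, p231, p321]) ↔
      f ∈ Finset.univ.biUnion fun m : Fin n => Fintype.piFinset (BSet m) := by
    intro f
    rw [mem_iff hn]
    simp only [Finset.mem_biUnion, Finset.mem_univ, true_and]
    exact exists_congr fun m => (mem_piFinset_iff m f).symm
  rw [Nat.card_congr (Equiv.subtypeEquivRight he), Nat.card_eq_finsetCard,
    Finset.card_biUnion]
  · exact Finset.sum_congr rfl fun m _ => Fintype.card_piFinset _
  · intro m _ m' _ hne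
    rw [Function.onFun, Finset.disjoint_left]
    intro f hf hf'
    exact hne (good_unique ((mem_piFinset_iff m f).mp hf) ((mem_piFinset_iff m' f).mp hf'))

end PkAux

lemma sum_shift (h : ℕ → ℚ) : ∀ N, ∑ i ∈ Finset.range N, h (i + 1) = ∑ k ∈ Finset.Icc 1 N, h k
  | 0 => by simp
  | N + 1 => by
    rw [Finset.sum_range_succ, Finset.sum_Icc_succ_top (by omega), sum_shift h N]

theorem stmt11 (n : ℕ) (hn : 1 ≤ n) :
    (pk n [p132, p231, p321] : ℚ) =
      ∑ k ∈ Finset.Icc 1 n, (n.factorial : ℚ) / k := by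
  have hn0 : 0 < n := hn
  rw [PkAux.pk_eq hn0]
  push_cast
  have hterm : ∀ m : Fin n, (∏ c : Fin n, ((PkAux.BSet m c).card : ℚ)) =
      (n.factorial : ℚ) / (m.val + 1) := by
    intro m
    have h := PkAux.prod_BSet m
    have hq : (∏ c : Fin n, ((PkAux.BSet m c).card : ℚ)) * ((m.val : ℚ) + 1)
        = (n.factorial : ℚ) := by
      exact_mod_cast congrArg (fun x : ℕ => (x : ℚ)) h
    rw [eq_div_iff (by positivity : ((m.val : ℚ) + 1) ≠ 0)]
    exact hq
  rw [Finset.sum_congr rfl fun m _ => hterm m]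
  rw [Fin.sum_univ_eq_sum_range (fun i => (n.factorial : ℚ) / (i + 1)) n]
  rw [← sum_shift (fun k => (n.factorial : ℚ) / k) n]
  exact Finset.sum_congr rfl fun i _ => by push_cast; ring
end
end

section
/- The number of parking functions of size n whose parking permutation avoids 132, 213, and 321 equals ∑_{k=1}^n k!·(n−k)!. -/
open Finset

noncomputable section

namespace S12

/-- mod dichotomy -/
lemma mod_cases {a n : ℕ} (hn : 0 < n) (h : a < 2 * n) :
    (a % n = a ∧ a < n) ∨ (a % n = a - n ∧ n ≤ a) := by
  rcases lt_or_ge a n with h1 | h1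
  · exact Or.inl ⟨Nat.mod_eq_of_lt h1, h1⟩
  · exact Or.inr ⟨by rw [Nat.mod_eq_sub_mod h1, Nat.mod_eq_of_lt (by omega)], h1⟩

lemma shift_cancel {n s : ℕ} (hs : s < n) {t : ℕ} (ht : t < n) :
    ((t + s) % n + (n - s)) % n = t := by
  rw [Nat.mod_add_mod]
  have : t + s + (n - s) = t + n := by omega
  rw [this, Nat.add_mod_right, Nat.mod_eq_of_lt ht]

lemma unshift_cancel {n s : ℕ} (hs : s < n) {t : ℕ} (ht : t < n) :
    ((t + (n - s)) % n + s) % n = t := by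
  rw [Nat.mod_add_mod]
  have : t + (n - s) + s = t + n := by omega
  rw [this, Nat.add_mod_right, Nat.mod_eq_of_lt ht]

/-- rotation by s -/
def rotPerm (n s : ℕ) (hs : s < n) : Equiv.Perm (Fin n) where
  toFun i := ⟨(i.val + s) % n, Nat.mod_lt _ (by omega)⟩
  invFun i := ⟨(i.val + (n - s)) % n, Nat.mod_lt _ (by omega)⟩
  left_inv i := Fin.ext (shift_cancel hs i.isLt)
  right_inv i := Fin.ext (unshift_cancel hs i.isLt)

@[simp] lemma rotPerm_val {n s : ℕ} (hs : s < n) (i : Fin n) :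
    (rotPerm n s hs i).val = (i.val + s) % n := rfl

/-- occupancy after k cars, for the rotation-s outcome -/
def occF (n s : ℕ) (hs : s < n) (k : ℕ) : Fin n → Option (Fin n) :=
  fun t => if (t.val + s) % n < k then some ⟨(t.val + s) % n, Nat.mod_lt _ (by omega)⟩ else none

/-- the family of parking functions with rotation-s outcome -/
def InF (n s : ℕ) (f : Fin n → Fin n) : Prop :=
  ∀ c : Fin n, (c.val < s → n - s ≤ (f c).val ∧ (f c).val ≤ n - s + c.val) ∧
    (s ≤ c.val → (f c).val ≤ c.val - s)

lemma InF_le_spot {n s : ℕ} (hs : s < n) {f : Fin n → Fin n} (hf : InF n s f) (c : Fin n) :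
    (f c).val ≤ (c.val + (n - s)) % n := by
  rcases lt_or_ge c.val s with h | h
  · have h2 := (hf c).1 h
    have : (c.val + (n - s)) % n = n - s + c.val := by
      rw [Nat.mod_eq_of_lt (by omega)]; omega
    omega
  · have h2 := (hf c).2 h
    have hc := c.isLt
    have : (c.val + (n - s)) % n = c.val - s := by
      rcases mod_cases (n := n) (by omega) (a := c.val + (n - s)) (by omega) with ⟨e, l⟩ | ⟨e, l⟩ <;> omega
    omega

/-- forward computation of the parking process -/
lemma parkAux_of_InF {n s : ℕ} (hs : s < n) {f : Fin n → Fin n} (hf : InF n s f) :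
    ∀ k, k ≤ n → parkAux f k = some (occF n s hs k) := by
  intro k
  induction k with
  | zero =>
      intro _
      have : occF n s hs 0 = fun _ => none := by
        funext t; simp [occF]
      rw [this, parkAux]
  | succ k ih =>
      intro hk
      have hkn : k < n := by omega
      rw [parkAux, ih (by omega), Option.bind_some, dif_pos hkn]
      set m : Fin n := ⟨(k + (n - s)) % n, Nat.mod_lt _ (by omega)⟩ with hm
      have hmval : ((m.val + s) % n) = k := unshift_cancel hs hkn
      have hfm : f ⟨k, hkn⟩ ≤ m := by
        rw [Fin.le_def]
        exact InF_le_spot hs hf ⟨k, hkn⟩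
      have hmnone : occF n s hs k m = none := by
        simp [occF, hmval]
      have hmem : m ∈ Finset.univ.filter fun t => f ⟨k, hkn⟩ ≤ t ∧ occF n s hs k t = none := by
        simp [Finset.mem_filter, hfm, hmnone]
      have hS : (Finset.univ.filter fun t => f ⟨k, hkn⟩ ≤ t ∧ occF n s hs k t = none).Nonempty :=
        ⟨m, hmem⟩
      rw [dif_pos hS]
      have hlb : ∀ t ∈ Finset.univ.filter fun t => f ⟨k, hkn⟩ ≤ t ∧ occF n s hs k t = none,
          m ≤ t := by
        intro t htmem
        rw [Finset.mem_filter] at htmem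
        obtain ⟨-, hft, hnone⟩ := htmem
        simp only [occF, ite_eq_right_iff] at hnone
        have hkt : ¬ ((t.val + s) % n < k) := by
          intro hcon; exact absurd (hnone hcon) (by simp)
        rw [Fin.le_def] at hft ⊢
        rw [Fin.le_def] at hfm
        have htn := t.isLt
        have hmlt : m.val = (k + (n - s)) % n := rfl
        rcases lt_or_ge k s with hks | hks
        · -- m = n - s + k ; f k ≥ n - s
          have h1 := ((hf ⟨k, hkn⟩).1 hks).1
          have hmv : m.val = n - s + k := by
            rw [hmlt, Nat.mod_eq_of_lt (by omega)]; omega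
          have htns : n - s ≤ t.val := le_trans h1 hft
          have : (t.val + s) % n = t.val - (n - s) := by
            rcases mod_cases (n := n) (by omega) (a := t.val + s) (by omega) with ⟨e, l⟩ | ⟨e, l⟩ <;> omega
          omega
        · -- m = k - s
          have hmv : m.val = k - s := by
            rcases mod_cases (n := n) (by omega) (a := k + (n - s)) (by omega) with ⟨e, l⟩ | ⟨e, l⟩ <;> omega
          rcases mod_cases (n := n) (by omega) (a := t.val + s) (by omega) with ⟨e, l⟩ | ⟨e, l⟩ <;> omega
      have hmin : (Finset.univ.filter fun t => f ⟨k, hkn⟩ ≤ t ∧ occF n s hs k t = none).min' hS = m :=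
        le_antisymm (Finset.min'_le _ _ hmem) (Finset.le_min' _ _ _ hlb)
      rw [hmin]
      congr 1
      funext t
      by_cases ht : t = m
      · subst ht
        rw [Function.update_self]
        simp [occF, hmval]
      · rw [Function.update_of_ne ht]
        have hne : (t.val + s) % n ≠ k := by
          intro hcon
          apply ht
          apply Fin.ext
          have := shift_cancel hs t.isLt
          rw [hcon] at this
          simp [hm, ← this]
        simp only [occF]
        by_cases h1 : (t.val + s) % n < k
        · rw [if_pos h1, if_pos (by omega)]
        · rw [if_neg h1, if_neg (by omega)]


/-- structure of one step of the parking process -/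
lemma parkAux_succ {n : ℕ} {f : Fin n → Fin n} {k : ℕ} (hk : k < n)
    {occ' : Fin n → Option (Fin n)} (h : parkAux f (k + 1) = some occ') :
    ∃ occ : Fin n → Option (Fin n), parkAux f k = some occ ∧
      ∃ m : Fin n, f ⟨k, hk⟩ ≤ m ∧ occ m = none ∧
        (∀ t : Fin n, f ⟨k, hk⟩ ≤ t → occ t = none → m ≤ t) ∧
        occ' = Function.update occ m (some ⟨k, hk⟩) := by
  rw [parkAux] at h
  obtain ⟨occ, h1, h2⟩ := Option.bind_eq_some_iff.mp h
  refine ⟨occ, h1, ?_⟩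
  rw [dif_pos hk] at h2
  by_cases hS : (Finset.univ.filter fun t => f ⟨k, hk⟩ ≤ t ∧ occ t = none).Nonempty
  · rw [dif_pos hS] at h2
    set m := (Finset.univ.filter fun t => f ⟨k, hk⟩ ≤ t ∧ occ t = none).min' hS with hmdef
    have hmmem := Finset.min'_mem _ hS
    rw [Finset.mem_filter] at hmmem
    refine ⟨m, hmmem.2.1, hmmem.2.2, ?_, (Option.some.inj h2).symm⟩
    intro t h3 h4
    exact Finset.min'_le _ _ (by simp [Finset.mem_filter, h3, h4])
  · rw [dif_neg hS] at h2
    exact absurd h2 (by simp)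

lemma occF_eq_step {n s : ℕ} (hs : s < n) {k : ℕ} (hk : k < n)
    {occ : Fin n → Option (Fin n)} {m : Fin n} (hnone : occ m = none)
    (hupd : Function.update occ m (some ⟨k, hk⟩) = occF n s hs (k + 1)) :
    occ = occF n s hs k ∧ m.val = (k + (n - s)) % n := by
  have hmval : (m.val + s) % n = k := by
    have := congrFun hupd m
    rw [Function.update_self] at this
    simp only [occF] at this
    by_cases h1 : (m.val + s) % n < k + 1
    · rw [if_pos h1] at this
      have := (Option.some.inj this)
      have := congrArg Fin.val this
      simpa using this.symm
    · rw [if_neg h1] at this; exact absurd this (by simp)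
  have hm2 : m.val = (k + (n - s)) % n := by
    have := shift_cancel hs m.isLt
    rw [hmval] at this
    exact this.symm
  refine ⟨?_, hm2⟩
  funext t
  by_cases ht : t = m
  · subst ht
    rw [hnone]
    simp [occF, hmval]
  · have := congrFun hupd t
    rw [Function.update_of_ne ht] at this
    rw [this]
    have hne : (t.val + s) % n ≠ k := by
      intro hcon
      apply ht
      apply Fin.ext
      have h2 := shift_cancel hs t.isLt
      rw [hcon] at h2
      omega
    simp only [occF]
    by_cases h1 : (t.val + s) % n < k
    · rw [if_pos h1, if_pos (by omega)]
    · rw [if_neg h1, if_neg (by omega)]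

/-- backward: outcome = rotation s forces the InF constraints -/
lemma InF_of_parkAux {n s : ℕ} (hs : s < n) {f : Fin n → Fin n}
    (h : parkAux f n = some (occF n s hs n)) : InF n s f := by
  -- downward induction: parkAux f k = occF k for all k ≤ n
  have key : ∀ j, j ≤ n → parkAux f (n - j) = some (occF n s hs (n - j)) := by
    intro j
    induction j with
    | zero => intro _; simpa using h
    | succ j ih =>
        intro hj
        have h1 := ih (by omega)
        have heq : n - j = (n - (j + 1)) + 1 := by omega
        rw [heq] at h1
        obtain ⟨occ, hocc, m, _, hnone, _, hupd⟩ := parkAux_succ (by omega) h1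
        obtain ⟨he, _⟩ := occF_eq_step hs (k := n - (j+1)) (by omega) hnone hupd.symm
        rw [hocc, he]
  have key2 : ∀ k, k ≤ n → parkAux f k = some (occF n s hs k) := by
    intro k hk
    have := key (n - k) (by omega)
    rwa [Nat.sub_sub_self hk] at this
  -- now extract constraints for each car
  intro c
  have hc := c.isLt
  have h1 := key2 (c.val + 1) (by omega)
  obtain ⟨occ, hocc, m, hfm, hnone, hmin, hupd⟩ := parkAux_succ hc h1
  have hocceq : occ = occF n s hs c.val := by
    rw [key2 c.val (by omega)] at hocc
    exact (Option.some.inj hocc).symm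
  subst hocceq
  obtain ⟨-, hmv⟩ := occF_eq_step hs hc hnone hupd.symm
  have hcfin : (⟨c.val, hc⟩ : Fin n) = c := rfl
  rw [hcfin] at hfm hmin
  rw [Fin.le_def] at hfm
  constructor
  · intro hcs
    have hmval : m.val = n - s + c.val := by
      rw [hmv, Nat.mod_eq_of_lt (by omega)]; omega
    refine ⟨?_, by omega⟩
    -- lower bound: suppose f c < n - s, then spot (f c) itself would be free and below m
    by_contra hcon
    push_neg at hcon
    have hfree : occF n s hs c.val (f c) = none := by
      simp only [occF, ite_eq_right_iff]
      intro hlt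
      exfalso
      have : ((f c).val + s) % n = (f c).val + s := Nat.mod_eq_of_lt (by omega)
      omega
    have := hmin (f c) (le_refl _) hfree
    rw [Fin.le_def] at this
    omega
  · intro hcs
    have hmval : m.val = c.val - s := by
      rcases mod_cases (n := n) (by omega) (a := c.val + (n - s)) (by omega) with ⟨e, l⟩ | ⟨e, l⟩ <;> omega
    omega

lemma isPF_of_InF {n s : ℕ} (hs : s < n) {f : Fin n → Fin n} (hf : InF n s f) :
    IsParkingFunction f := by
  intro i
  have h1 : (Finset.Iic i).card = i.val + 1 := by rw [Fin.card_Iic]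
  rw [← h1]
  apply Finset.card_le_card_of_injOn (fun t => rotPerm n s hs t)
  · intro t ht
    rw [Finset.mem_coe, Finset.mem_Iic] at ht
    rw [Finset.mem_coe, Finset.mem_filter]
    refine ⟨Finset.mem_univ _, ?_⟩
    rw [Fin.le_def]
    have h2 := InF_le_spot hs hf (rotPerm n s hs t)
    have h3 : ((rotPerm n s hs t).val + (n - s)) % n = t.val := shift_cancel hs t.isLt
    rw [Fin.le_def] at ht
    beta_reduce
    omega
  · exact fun a _ b _ hab => (rotPerm n s hs).injective hab

/-- helper to build pattern containment from an explicit triple -/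
lemma strictMono_triple {n : ℕ} {i j l : Fin n} (hij : i < j) (hjl : j < l) :
    StrictMono ![i, j, l] := by
  intro a b hab
  fin_cases a <;> fin_cases b <;>
    simp_all [Matrix.cons_val_zero, Matrix.cons_val_one, Matrix.head_cons] <;>
    first
      | exact absurd hab (by decide)
      | exact hij
      | exact hjl
      | exact hij.trans hjl

/-- rotations avoid all three patterns -/
lemma rot_avoids {n s : ℕ} (hs : s < n) :
    AvoidsAll (rotPerm n s hs) [p132, p213, p321] := by
  have triple : ∀ i j l : Fin n, i < j → j < l →
      ((i.val + s) % n < (j.val + s) % n ∧ (j.val + s) % n < (l.val + s) % n) ∨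
      ((l.val + s) % n < (i.val + s) % n ∧ (i.val + s) % n < (j.val + s) % n) ∨
      ((j.val + s) % n < (l.val + s) % n ∧ (l.val + s) % n < (i.val + s) % n) := by
    intro i j l hij hjl
    rw [Fin.lt_def] at hij hjl
    have hi := i.isLt; have hj := j.isLt; have hl := l.isLt
    rcases mod_cases (n := n) (by omega) (a := i.val + s) (by omega) with ⟨e1, c1⟩ | ⟨e1, c1⟩ <;>
      rcases mod_cases (n := n) (by omega) (a := j.val + s) (by omega) with ⟨e2, c2⟩ | ⟨e2, c2⟩ <;>
      rcases mod_cases (n := n) (by omega) (a := l.val + s) (by omega) with ⟨e3, c3⟩ | ⟨e3, c3⟩ <;>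
      omega
  intro σ hσ hcon
  obtain ⟨g, hg, hc⟩ := hcon
  have h01 : g 0 < g 1 := hg (by decide)
  have h12 : g 1 < g 2 := hg (by decide)
  have T := triple (g 0) (g 1) (g 2) h01 h12
  simp only [List.mem_cons, List.mem_singleton, List.not_mem_nil, or_false] at hσ
  rcases hσ with h | h | h <;> subst h
  · have e1 : rotPerm n s hs (g 0) < rotPerm n s hs (g 2) := (hc 0 2).mp (by decide)
    have e2 : rotPerm n s hs (g 2) < rotPerm n s hs (g 1) := (hc 2 1).mp (by decide)
    rw [Fin.lt_def, rotPerm_val, rotPerm_val] at e1 e2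
    omega
  · have e1 : rotPerm n s hs (g 1) < rotPerm n s hs (g 0) := (hc 1 0).mp (by decide)
    have e2 : rotPerm n s hs (g 0) < rotPerm n s hs (g 2) := (hc 0 2).mp (by decide)
    rw [Fin.lt_def, rotPerm_val, rotPerm_val] at e1 e2
    omega
  · have e1 : rotPerm n s hs (g 2) < rotPerm n s hs (g 1) := (hc 2 1).mp (by decide)
    have e2 : rotPerm n s hs (g 1) < rotPerm n s hs (g 0) := (hc 1 0).mp (by decide)
    rw [Fin.lt_def, rotPerm_val, rotPerm_val] at e1 e2
    omega

section Contains
variable {n : ℕ} (ρ : Equiv.Perm (Fin n)) {i j l : Fin n}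

lemma contains132 (hij : i < j) (hjl : j < l) (h1 : ρ i < ρ l) (h2 : ρ l < ρ j) :
    ContainsPattern ρ p132 := by
  refine ⟨![i, j, l], strictMono_triple hij hjl, fun a b => ?_⟩
  fin_cases a <;> fin_cases b <;>
    simp only [Matrix.cons_val_zero, Matrix.cons_val_one, Matrix.head_cons,
      Matrix.cons_val_two, Matrix.tail_cons] <;>
    first
      | exact iff_of_false (by decide) (lt_irrefl _)
      | exact iff_of_true (by decide) h1
      | exact iff_of_true (by decide) h2
      | exact iff_of_true (by decide) (h1.trans h2)
      | exact iff_of_false (by decide) (asymm h1)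
      | exact iff_of_false (by decide) (asymm h2)
      | exact iff_of_false (by decide) (asymm (h1.trans h2))

lemma contains213 (hij : i < j) (hjl : j < l) (h1 : ρ j < ρ i) (h2 : ρ i < ρ l) :
    ContainsPattern ρ p213 := by
  refine ⟨![i, j, l], strictMono_triple hij hjl, fun a b => ?_⟩
  fin_cases a <;> fin_cases b <;>
    simp only [Matrix.cons_val_zero, Matrix.cons_val_one, Matrix.head_cons,
      Matrix.cons_val_two, Matrix.tail_cons] <;>
    first
      | exact iff_of_false (by decide) (lt_irrefl _)
      | exact iff_of_true (by decide) h1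
      | exact iff_of_true (by decide) h2
      | exact iff_of_true (by decide) (h1.trans h2)
      | exact iff_of_false (by decide) (asymm h1)
      | exact iff_of_false (by decide) (asymm h2)
      | exact iff_of_false (by decide) (asymm (h1.trans h2))

lemma contains321 (hij : i < j) (hjl : j < l) (h1 : ρ l < ρ j) (h2 : ρ j < ρ i) :
    ContainsPattern ρ p321 := by
  refine ⟨![i, j, l], strictMono_triple hij hjl, fun a b => ?_⟩
  fin_cases a <;> fin_cases b <;>
    simp only [Matrix.cons_val_zero, Matrix.cons_val_one, Matrix.head_cons,
      Matrix.cons_val_two, Matrix.tail_cons] <;>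
    first
      | exact iff_of_false (by decide) (lt_irrefl _)
      | exact iff_of_true (by decide) h1
      | exact iff_of_true (by decide) h2
      | exact iff_of_true (by decide) (h1.trans h2)
      | exact iff_of_false (by decide) (asymm h1)
      | exact iff_of_false (by decide) (asymm h2)
      | exact iff_of_false (by decide) (asymm (h1.trans h2))

end Contains

/-- any permutation avoiding the three patterns is a rotation -/
lemma rotation_of_avoids {n : ℕ} (hn : 0 < n) (ρ : Equiv.Perm (Fin n))
    (hA : AvoidsAll ρ [p132, p213, p321]) :
    ∀ m (hm : m < n), (ρ ⟨m, hm⟩).val = (m + (ρ ⟨0, hn⟩).val) % n := by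
  have A132 : ∀ a b c : Fin n, a < b → b < c → ¬(ρ a < ρ c ∧ ρ c < ρ b) :=
    fun a b c h1 h2 ⟨e1, e2⟩ => hA p132 (by simp) (contains132 ρ h1 h2 e1 e2)
  have A213 : ∀ a b c : Fin n, a < b → b < c → ¬(ρ b < ρ a ∧ ρ a < ρ c) :=
    fun a b c h1 h2 ⟨e1, e2⟩ => hA p213 (by simp) (contains213 ρ h1 h2 e1 e2)
  have A321 : ∀ a b c : Fin n, a < b → b < c → ¬(ρ c < ρ b ∧ ρ b < ρ a) :=
    fun a b c h1 h2 ⟨e1, e2⟩ => hA p321 (by simp) (contains321 ρ h1 h2 e1 e2)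
  set s := (ρ ⟨0, hn⟩).val with hsdef
  have hslt : s < n := (ρ ⟨0, hn⟩).isLt
  intro m
  induction m with
  | zero =>
      intro hm
      show (ρ ⟨0, hm⟩).val = (0 + s) % n
      rw [Nat.zero_add, Nat.mod_eq_of_lt hslt]
  | succ m ih =>
      intro hm
      have hmn : m < n := by omega
      have hv : (ρ ⟨m, hmn⟩).val = (m + s) % n := ih hmn
      set P : Fin n := ⟨m, hmn⟩ with hP
      set Q : Fin n := ⟨m + 1, hm⟩ with hQ
      have hPv : P.val = m := rfl
      have hQv : Q.val = m + 1 := rfl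
      have hPQ : P < Q := by rw [Fin.lt_def]; omega
      have hne : (ρ P).val ≠ (ρ Q).val := by
        intro h
        have h2 := ρ.injective (Fin.ext h)
        have := congrArg Fin.val h2
        omega
      have loc : ∀ w : Fin n, ρ.symm w ≠ P → ρ.symm w ≠ Q →
          (ρ.symm w).val < m ∨ m + 1 < (ρ.symm w).val := by
        intro w h1 h2
        rw [Fin.ne_iff_vne] at h1 h2
        have := (ρ.symm w).isLt
        omega
      have asc : (ρ P).val < (ρ Q).val → (ρ Q).val = (ρ P).val + 1 := by
        intro hlt
        by_contra hne2
        have hQlt := (ρ Q).isLt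
        set w : Fin n := ⟨(ρ P).val + 1, by omega⟩ with hw
        have hwv : w.val = (ρ P).val + 1 := rfl
        have hρw : ρ (ρ.symm w) = w := Equiv.apply_symm_apply ρ w
        have hρwv : (ρ (ρ.symm w)).val = w.val := congrArg Fin.val hρw
        have hwP : ρ.symm w ≠ P := by
          intro h; rw [h] at hρwv; omega
        have hwQ : ρ.symm w ≠ Q := by
          intro h; rw [h] at hρwv; omega
        rcases loc w hwP hwQ with hcase | hcase
        · exact A213 (ρ.symm w) P Q (by rw [Fin.lt_def]; omega) hPQ
            ⟨by rw [Fin.lt_def]; omega, by rw [Fin.lt_def]; omega⟩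
        · exact A132 P Q (ρ.symm w) hPQ (by rw [Fin.lt_def]; omega)
            ⟨by rw [Fin.lt_def]; omega, by rw [Fin.lt_def]; omega⟩
      have descA : (ρ Q).val < (ρ P).val → (ρ P).val = n - 1 := by
        intro hgt
        by_contra hne2
        have hPlt := (ρ P).isLt
        set w : Fin n := ⟨(ρ P).val + 1, by omega⟩ with hw
        have hwv : w.val = (ρ P).val + 1 := rfl
        have hρw : ρ (ρ.symm w) = w := Equiv.apply_symm_apply ρ w
        have hρwv : (ρ (ρ.symm w)).val = w.val := congrArg Fin.val hρw
        have hwP : ρ.symm w ≠ P := by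
          intro h; rw [h] at hρwv; omega
        have hwQ : ρ.symm w ≠ Q := by
          intro h; rw [h] at hρwv; omega
        rcases loc w hwP hwQ with hcase | hcase
        · exact A321 (ρ.symm w) P Q (by rw [Fin.lt_def]; omega) hPQ
            ⟨by rw [Fin.lt_def]; omega, by rw [Fin.lt_def]; omega⟩
        · exact A213 P Q (ρ.symm w) hPQ (by rw [Fin.lt_def]; omega)
            ⟨by rw [Fin.lt_def]; omega, by rw [Fin.lt_def]; omega⟩
      have descB : (ρ Q).val < (ρ P).val → (ρ Q).val = 0 := by
        intro hgt
        by_contra hne2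
        set w : Fin n := ⟨(ρ Q).val - 1, by omega⟩ with hw
        have hwv : w.val = (ρ Q).val - 1 := rfl
        have hρw : ρ (ρ.symm w) = w := Equiv.apply_symm_apply ρ w
        have hρwv : (ρ (ρ.symm w)).val = w.val := congrArg Fin.val hρw
        have hwQ : ρ.symm w ≠ Q := by
          intro h; rw [h] at hρwv; omega
        have hwP : ρ.symm w ≠ P := by
          intro h; rw [h] at hρwv; omega
        rcases loc w hwP hwQ with hcase | hcase
        · exact A132 (ρ.symm w) P Q (by rw [Fin.lt_def]; omega) hPQ
            ⟨by rw [Fin.lt_def]; omega, by rw [Fin.lt_def]; omega⟩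
        · exact A321 P Q (ρ.symm w) hPQ (by rw [Fin.lt_def]; omega)
            ⟨by rw [Fin.lt_def]; omega, by rw [Fin.lt_def]; omega⟩
      show (ρ Q).val = (m + 1 + s) % n
      rcases lt_trichotomy ((ρ P).val) ((ρ Q).val) with hlt | heq | hgt
      · have h1 := asc hlt
        have h2 := (ρ Q).isLt
        have hb : (m + s) % n + 1 < n := by omega
        have h3 : (m + 1 + s) % n = (m + s) % n + 1 := by
          rw [show m + 1 + s = (m + s) + 1 by omega, Nat.add_mod,
            Nat.mod_eq_of_lt (show 1 < n by omega)]
          exact Nat.mod_eq_of_lt (by omega)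
        omega
      · exact absurd heq hne
      · have e1 := descA hgt
        have e2 := descB hgt
        have h3 : (m + s) % n = n - 1 := by omega
        have h4 : (m + 1 + s) % n = 0 := by
          rw [show m + 1 + s = (m + s) + 1 by omega, Nat.add_mod, h3,
            Nat.mod_eq_of_lt (show 1 < n by omega)]
          simp [Nat.sub_add_cancel (show 1 ≤ n by omega)]
        omega

lemma occF_top {n s : ℕ} (hs : s < n) :
    occF n s hs n = fun i => some (rotPerm n s hs i) := by
  funext t
  show (if (t.val + s) % n < n then _ else _) = _
  rw [if_pos (Nat.mod_lt _ (by omega))]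
  rfl

lemma InF_isParkingPerm {n s : ℕ} (hs : s < n) {f : Fin n → Fin n} (hf : InF n s f) :
    IsParkingPerm f (rotPerm n s hs) := by
  show parkAux f n = _
  rw [parkAux_of_InF hs hf n le_rfl, occF_top hs]

lemma mem_iff {n : ℕ} (hn : 0 < n) (f : Fin n → Fin n) :
    (IsParkingFunction f ∧ ∃ ρ : Equiv.Perm (Fin n),
        IsParkingPerm f ρ ∧ AvoidsAll ρ [p132, p213, p321])
      ↔ ∃ s, s < n ∧ InF n s f := by
  constructor
  · rintro ⟨hpf, ρ, hperm, havoid⟩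
    have hslt : (ρ ⟨0, hn⟩).val < n := (ρ ⟨0, hn⟩).isLt
    set s := (ρ ⟨0, hn⟩).val with hsdef
    have hrot : ρ = rotPerm n s hslt := by
      apply Equiv.ext
      intro i
      apply Fin.ext
      have h2 := rotation_of_avoids hn ρ havoid i.val i.isLt
      simpa using h2
    refine ⟨s, hslt, InF_of_parkAux hslt ?_⟩
    rw [hrot] at hperm
    rw [occF_top hslt]
    exact hperm
  · rintro ⟨s, hs, hf⟩
    exact ⟨isPF_of_InF hs hf, rotPerm n s hs, InF_isParkingPerm hs hf, rot_avoids hs⟩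

open Classical in
lemma card_InF {n s : ℕ} (hs : s < n) :
    (Finset.univ.filter fun f : Fin n → Fin n => InF n s f).card
      = s.factorial * (n - s).factorial := by
  classical
  have hB : (Finset.univ.filter fun f : Fin n → Fin n => InF n s f)
      = Fintype.piFinset (fun c : Fin n =>
        if h : c.val < s then
          Finset.Icc (⟨n - s, by omega⟩ : Fin n) ⟨n - s + c.val, by omega⟩
        else Finset.Iic (⟨c.val - s, by omega⟩ : Fin n)) := by
    ext f
    rw [Finset.mem_filter, Fintype.mem_piFinset]
    simp only [Finset.mem_univ, true_and]
    constructor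
    · intro hf c
      rcases lt_or_ge c.val s with h | h
      · rw [dif_pos h, Finset.mem_Icc]
        exact ⟨((hf c).1 h).1, ((hf c).1 h).2⟩
      · rw [dif_neg (by omega), Finset.mem_Iic]
        exact (hf c).2 h
    · intro hf c
      constructor
      · intro h
        have h2 := hf c
        rw [dif_pos h, Finset.mem_Icc] at h2
        exact h2
      · intro h
        have h2 := hf c
        rw [dif_neg (by omega), Finset.mem_Iic] at h2
        exact h2
  rw [hB, Fintype.card_piFinset]
  have hcongr : ∀ c : Fin n,
      (if h : c.val < s then
          Finset.Icc (⟨n - s, by omega⟩ : Fin n) ⟨n - s + c.val, by omega⟩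
        else Finset.Iic (⟨c.val - s, by omega⟩ : Fin n)).card
      = if c.val < s then c.val + 1 else c.val - s + 1 := by
    intro c
    by_cases h : c.val < s
    · rw [dif_pos h, if_pos h, Fin.card_Icc]
      show n - s + c.val + 1 - (n - s) = c.val + 1
      omega
    · rw [dif_neg h, if_neg h, Fin.card_Iic]
  rw [Finset.prod_congr rfl (fun c _ => hcongr c),
    Fin.prod_univ_eq_prod_range (fun m => if m < s then m + 1 else m - s + 1) n,
    Finset.range_eq_Ico, ← Finset.prod_Ico_consecutive _ (Nat.zero_le s) (le_of_lt hs)]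
  have e1 : ∏ m ∈ Finset.Ico 0 s, (if m < s then m + 1 else m - s + 1) = s.factorial := by
    rw [← Finset.range_eq_Ico]
    rw [Finset.prod_congr rfl (fun m hm => if_pos (Finset.mem_range.mp hm))]
    exact Finset.prod_range_add_one_eq_factorial s
  have e2 : ∏ m ∈ Finset.Ico s n, (if m < s then m + 1 else m - s + 1)
      = (n - s).factorial := by
    rw [Finset.prod_Ico_eq_prod_range]
    have : ∀ m ∈ Finset.range (n - s),
        (if s + m < s then s + m + 1 else s + m - s + 1) = m + 1 := by
      intro m _
      rw [if_neg (by omega)]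
      congr 1
      omega
    rw [Finset.prod_congr rfl this]
    exact Finset.prod_range_add_one_eq_factorial (n - s)
  rw [e1, e2]

end S12



theorem stmt12 (n : ℕ) (hn : 1 ≤ n) :
    pk n [p132, p213, p321] =
      ∑ k ∈ Finset.Icc 1 n, k.factorial * (n - k).factorial := by
  classical
  have hn0 : 0 < n := hn
  have h1 : pk n [p132, p213, p321]
      = (Finset.univ.filter fun f : Fin n → Fin n => IsParkingFunction f ∧
          ∃ ρ : Equiv.Perm (Fin n), IsParkingPerm f ρ ∧ AvoidsAll ρ [p132, p213, p321]).card := by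
    rw [pk, Nat.card_eq_fintype_card, Fintype.card_subtype]
  rw [h1]
  have h2 : (Finset.univ.filter fun f : Fin n → Fin n => IsParkingFunction f ∧
        ∃ ρ : Equiv.Perm (Fin n), IsParkingPerm f ρ ∧ AvoidsAll ρ [p132, p213, p321])
      = (Finset.range n).biUnion
          (fun s => Finset.univ.filter fun f : Fin n → Fin n => S12.InF n s f) := by
    ext f
    simp only [Finset.mem_filter, Finset.mem_biUnion, Finset.mem_range, Finset.mem_univ,
      true_and]
    rw [S12.mem_iff hn0 f]
  have hd : ∀ s ∈ Finset.range n, ∀ t ∈ Finset.range n, s ≠ t →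
      Disjoint (Finset.univ.filter fun f : Fin n → Fin n => S12.InF n s f)
        (Finset.univ.filter fun f : Fin n → Fin n => S12.InF n t f) := by
    intro s hs t ht hst
    rw [Finset.disjoint_left]
    intro f hf1 hf2
    rw [Finset.mem_filter] at hf1 hf2
    have c0 := hf1.2 ⟨0, hn0⟩
    have c1 := hf2.2 ⟨0, hn0⟩
    have hz : (⟨0, hn0⟩ : Fin n).val = 0 := rfl
    rw [Finset.mem_range] at hs ht
    rw [hz] at c0 c1
    omega
  rw [h2, Finset.card_biUnion hd]
  have h3 : ∀ s ∈ Finset.range n,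
      (Finset.univ.filter fun f : Fin n → Fin n => S12.InF n s f).card
        = s.factorial * (n - s).factorial :=
    fun s hs => S12.card_InF (Finset.mem_range.mp hs)
  rw [Finset.sum_congr rfl h3]
  refine Finset.sum_nbij' (fun s => n - s) (fun k => n - k) ?_ ?_ ?_ ?_ ?_
  · intro a ha; simp only [Finset.mem_range] at ha; simp only [Finset.mem_Icc]; omega
  · intro a ha; simp only [Finset.mem_Icc] at ha; simp only [Finset.mem_range]; omega
  · intro a ha; simp only [Finset.mem_range] at ha
    show n - (n - a) = a
    omega
  · intro a ha; simp only [Finset.mem_Icc] at ha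
    show n - (n - a) = a
    omega
  · intro a ha; simp only [Finset.mem_range] at ha
    show a.factorial * (n - a).factorial = (n - a).factorial * (n - (n - a)).factorial
    rw [Nat.sub_sub_self (by omega : a ≤ n)]
    exact Nat.mul_comm _ _
end
end
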